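/- arXiv:1306.0634 — 2 statements merged into one kernel-verified Lean document; each statement's English description precedes it below -/
import Mathlib

section
/- For every integer r ≥ 6, there exists an r-uniform bi-hypergraph with exactly r(r − 1) − 1 vertices which is a one-realization of {r + 1, r, r − 1}. -/
/-- A bi-hypergraph: a finite vertex set together with a family of bi-edges,
each bi-edge being a subset of the vertex set. -/
structure BiHypergraph (α : Type*) [DecidableEq α] where
  verts : Finset α
  edges : Finset (Finset α)
  edges_sub : ∀ e ∈ edges, e ⊆ verts

namespace BiHypergraph

variable {α : Type*} [DecidableEq α]

/-- `H` is `r`-uniform: every bi-edge has exactly `r` vertices. -/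
def IsUniform (H : BiHypergraph α) (r : ℕ) : Prop :=
  ∀ e ∈ H.edges, e.card = r

/-- `P` is a strict coloring of `H`: a partition of the vertex set into nonempty
classes such that every bi-edge has at least two vertices lying in a common class
and at least two vertices lying in distinct classes.  A strict `k`-coloring is a
strict coloring `P` with `P.card = k`. -/
def IsStrictColoring (H : BiHypergraph α) (P : Finset (Finset α)) : Prop :=
  (∀ C ∈ P, C.Nonempty) ∧
  (∀ C ∈ P, C ⊆ H.verts) ∧
  (∀ x ∈ H.verts, ∃! C, C ∈ P ∧ x ∈ C) ∧
  (∀ e ∈ H.edges,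
    (∃ C ∈ P, 2 ≤ (e ∩ C).card) ∧
    (∃ x ∈ e, ∃ y ∈ e, ∃ C ∈ P, ∃ D ∈ P, C ≠ D ∧ x ∈ C ∧ y ∈ D))

/-- The feasible set of `H`: all `k` such that `H` admits a strict `k`-coloring. -/
def feasibleSet (H : BiHypergraph α) : Set ℕ :=
  {k | ∃ P : Finset (Finset α), H.IsStrictColoring P ∧ P.card = k}

/-- `H` is a one-realization of `S`: its feasible set is `S`, and for every `k`
there is at most one partition which is a strict `k`-coloring of `H`. -/
def IsOneRealization (H : BiHypergraph α) (S : Finset ℕ) : Prop :=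
  H.feasibleSet = ↑S ∧
  ∀ P Q : Finset (Finset α), H.IsStrictColoring P → H.IsStrictColoring Q →
    P.card = Q.card → P = Q

end BiHypergraph



set_option linter.unusedSectionVars false

namespace Stmt16Aux
open Finset

def n (r : ℕ) : ℕ := r * (r - 1) - 1
def X (r : ℕ) : Finset ℕ := Finset.range (n r)
def row (r i : ℕ) : Finset ℕ := Finset.Ico (i * r) (min ((i + 1) * r) (n r))
def V1 (r : ℕ) : Finset ℕ := insert (2 * r - 1) (Finset.Ico 1 (r - 1))
def V2 (r : ℕ) : Finset ℕ := insert (r - 1) (Finset.Ico (r + 1) (2 * r - 1))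
def units (r : ℕ) : Finset (Finset ℕ) :=
  insert (V1 r) (insert (V2 r) ((Finset.Ico 2 (r - 1)).image (row r)))
def P1 (r : ℕ) : Finset (Finset ℕ) := insert {0} (insert {r} (units r))
def P2 (r : ℕ) : Finset (Finset ℕ) := insert {0, r} (units r)
def P3 (r : ℕ) : Finset (Finset ℕ) := (Finset.range (r - 1)).image (row r)

def IsEdge (r : ℕ) (e : Finset ℕ) : Prop :=
  e ⊆ X r ∧ e.card = r ∧ (∀ i, i < r - 1 → ¬ e ⊆ row r i) ∧
    ∃ C ∈ units r, 2 ≤ (e ∩ C).card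

open scoped Classical in
noncomputable def edges (r : ℕ) : Finset (Finset ℕ) :=
  (X r).powerset.filter (fun e => IsEdge r e)

lemma mem_edges {r : ℕ} {e : Finset ℕ} : e ∈ edges r ↔ IsEdge r e := by
  classical
  simp only [edges, Finset.mem_filter, Finset.mem_powerset, Finset.filter_congr_decidable]
  exact ⟨fun h => h.2, fun h => ⟨h.1, h⟩⟩

section Basic
variable {r : ℕ} (hr : 6 ≤ r)

include hr

lemma n_eq : n r = r * r - r - 1 := by
  unfold n
  rw [Nat.mul_sub, Nat.mul_one]

lemma rsq : 6 * r ≤ r * r := Nat.mul_le_mul_right r hr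

lemma n_big : 2 * r + 2 < n r := by
  have h1 := n_eq hr
  have h2 := rsq hr
  omega

lemma mem_X {v : ℕ} : v ∈ X r ↔ v < n r := Finset.mem_range

lemma mem_row {i v : ℕ} : v ∈ row r i ↔ i * r ≤ v ∧ v < min ((i + 1) * r) (n r) := by
  unfold row; rw [Finset.mem_Ico]

lemma row_subset_X {i : ℕ} : row r i ⊆ X r := by
  intro v hv
  rw [mem_row hr] at hv
  rw [mem_X hr]
  have := min_le_right ((i+1)*r) (n r)
  omega

lemma rowIdx_eq {i v : ℕ} (hv : v ∈ row r i) : v / r = i := by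
  rw [mem_row hr] at hv
  have h1 : i * r ≤ v := hv.1
  have h2 : v < (i + 1) * r := lt_of_lt_of_le hv.2 (min_le_left _ _)
  have hr0 : 0 < r := by omega
  exact Nat.div_eq_of_lt_le h1 h2

lemma mem_row_self {v : ℕ} (hv : v ∈ X r) : v ∈ row r (v / r) := by
  rw [mem_X hr] at hv
  rw [mem_row hr]
  have hr0 : 0 < r := by omega
  have h1 := Nat.div_add_mod v r
  have h2 : v % r < r := Nat.mod_lt v hr0
  have h3 : (v / r + 1) * r = v / r * r + r := by rw [Nat.succ_mul]
  have h4 : r * (v / r) = v / r * r := Nat.mul_comm _ _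
  constructor
  · omega
  · rw [lt_min_iff]; constructor <;> omega

lemma rowIdx_lt {v : ℕ} (hv : v ∈ X r) : v / r < r - 1 := by
  rw [mem_X hr] at hv
  have hn := n_eq hr
  have hr0 : 0 < r := by omega
  rw [Nat.div_lt_iff_lt_mul hr0]
  have h : (r - 1) * r = r * r - r := by rw [Nat.sub_mul, Nat.one_mul]
  omega

lemma row_disjoint {i j : ℕ} (hij : i ≠ j) : ∀ v, v ∈ row r i → v ∉ row r j := by
  intro v hvi hvj
  have := rowIdx_eq hr hvi
  have := rowIdx_eq hr hvj
  omega

lemma card_row {i : ℕ} (hi : i < r - 1) : (row r i).card = if i = r - 2 then r - 1 else r := by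
  unfold row
  rw [Nat.card_Ico]
  have hn := n_eq hr
  have hsq := rsq hr
  by_cases h : i = r - 2
  · subst h
    rw [if_pos rfl]
    have h1 : (r - 2 + 1) * r = r * r - r := by
      have : r - 2 + 1 = r - 1 := by omega
      rw [this, Nat.sub_mul, Nat.one_mul]
    have h2 : (r - 2) * r = r * r - 2 * r := by rw [Nat.sub_mul]
    rw [min_eq_right (by omega)]
    omega
  · simp only [if_neg h]
    have hi2 : i + 1 ≤ r - 2 := by omega
    have h1 : (i + 1) * r ≤ (r - 2) * r := Nat.mul_le_mul_right r hi2
    have h2 : (r - 2) * r = r * r - 2 * r := by rw [Nat.sub_mul]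
    have h3 : (i + 1) * r = i * r + r := by rw [Nat.succ_mul]
    rw [min_eq_left (by omega)]
    omega

lemma card_row_ge {i : ℕ} (hi : i < r - 1) : r - 1 ≤ (row r i).card := by
  rw [card_row hr hi]; split <;> omega

lemma card_row_le {i : ℕ} : (row r i).card ≤ r := by
  unfold row
  rw [Nat.card_Ico]
  have h1 := min_le_left ((i + 1) * r) (n r)
  have h3 : (i + 1) * r = i * r + r := by rw [Nat.succ_mul]
  omega

lemma mem_V1 {v : ℕ} : v ∈ V1 r ↔ (1 ≤ v ∧ v < r - 1) ∨ v = 2 * r - 1 := by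
  unfold V1
  rw [Finset.mem_insert, Finset.mem_Ico]
  tauto

lemma mem_V2 {v : ℕ} : v ∈ V2 r ↔ v = r - 1 ∨ (r + 1 ≤ v ∧ v < 2 * r - 1) := by
  unfold V2
  rw [Finset.mem_insert, Finset.mem_Ico]

lemma card_V1 : (V1 r).card = r - 1 := by
  unfold V1
  rw [Finset.card_insert_of_notMem (by rw [Finset.mem_Ico]; omega), Nat.card_Ico]
  omega

lemma card_V2 : (V2 r).card = r - 1 := by
  unfold V2
  rw [Finset.card_insert_of_notMem (by rw [Finset.mem_Ico]; omega), Nat.card_Ico]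
  omega

lemma V1_subset_X : V1 r ⊆ X r := by
  intro v hv
  rw [mem_V1 hr] at hv
  rw [mem_X hr]
  have := n_big hr
  omega

lemma V2_subset_X : V2 r ⊆ X r := by
  intro v hv
  rw [mem_V2 hr] at hv
  rw [mem_X hr]
  have := n_big hr
  omega

end Basic

section Basic2
variable {r : ℕ} (hr : 6 ≤ r)
include hr

def IsPartition (r : ℕ) (P : Finset (Finset ℕ)) : Prop :=
  (∀ C ∈ P, C.Nonempty) ∧ (∀ C ∈ P, C ⊆ X r) ∧ (∀ v ∈ X r, ∃! C, C ∈ P ∧ v ∈ C)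

omit hr in
lemma part_unique {P : Finset (Finset ℕ)} (hP : IsPartition r P) {C D : Finset ℕ}
    (hC : C ∈ P) (hD : D ∈ P) {v : ℕ} (hvC : v ∈ C) (hvD : v ∈ D) : C = D := by
  have hvX : v ∈ X r := hP.2.1 C hC hvC
  obtain ⟨E, -, hEuniq⟩ := hP.2.2 v hvX
  rw [hEuniq C ⟨hC, hvC⟩, hEuniq D ⟨hD, hvD⟩]

omit hr in
lemma part_disjoint {P : Finset (Finset ℕ)} (hP : IsPartition r P) {C D : Finset ℕ}
    (hC : C ∈ P) (hD : D ∈ P) (hCD : C ≠ D) : Disjoint C D := by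
  rw [Finset.disjoint_left]
  intro v hvC hvD
  exact hCD (part_unique hP hC hD hvC hvD)

omit hr in
lemma part_biUnion {P : Finset (Finset ℕ)} (hP : IsPartition r P) {e : Finset ℕ}
    (he : e ⊆ X r) : P.biUnion (fun C => e ∩ C) = e := by
  ext v
  rw [Finset.mem_biUnion]
  constructor
  · rintro ⟨C, -, hv⟩; exact (Finset.mem_inter.mp hv).1
  · intro hv
    obtain ⟨C, ⟨hC, hvC⟩, -⟩ := hP.2.2 v (he hv)
    exact ⟨C, hC, Finset.mem_inter.mpr ⟨hv, hvC⟩⟩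

omit hr in
lemma part_sum_inter {P : Finset (Finset ℕ)} (hP : IsPartition r P) {e : Finset ℕ}
    (he : e ⊆ X r) : ∑ C ∈ P, (e ∩ C).card = e.card := by
  rw [← Finset.card_biUnion, part_biUnion hP he]
  intro C hC D hD hCD
  exact Finset.disjoint_of_subset_left (Finset.inter_subset_right)
    (Finset.disjoint_of_subset_right (Finset.inter_subset_right) (part_disjoint hP hC hD hCD))

omit hr in
lemma part_sum_card {P : Finset (Finset ℕ)} (hP : IsPartition r P) :
    ∑ C ∈ P, C.card = n r := by
  have h := part_sum_inter hP (Finset.Subset.refl (X r))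
  have : ∀ C ∈ P, X r ∩ C = C := fun C hC =>
    Finset.inter_eq_right.mpr (hP.2.1 C hC)
  rw [Finset.sum_congr rfl (fun C hC => by rw [this C hC])] at h
  rw [h]
  exact Finset.card_range _

lemma mem_units {C : Finset ℕ} :
    C ∈ units r ↔ C = V1 r ∨ C = V2 r ∨ ∃ j, 2 ≤ j ∧ j < r - 1 ∧ C = row r j := by
  unfold units
  simp only [Finset.mem_insert, Finset.mem_image, Finset.mem_Ico]
  constructor
  · rintro (h | h | ⟨j, ⟨h1, h2⟩, h3⟩)
    · exact Or.inl h
    · exact Or.inr (Or.inl h)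
    · exact Or.inr (Or.inr ⟨j, h1, h2, h3.symm⟩)
  · rintro (h | h | ⟨j, h1, h2, h3⟩)
    · exact Or.inl h
    · exact Or.inr (Or.inl h)
    · exact Or.inr (Or.inr ⟨j, ⟨h1, h2⟩, h3.symm⟩)

lemma row_elem_big {j v : ℕ} (hj : 2 ≤ j) (hv : v ∈ row r j) : 2 * r ≤ v := by
  rw [mem_row hr] at hv
  have : 2 * r ≤ j * r := Nat.mul_le_mul_right r hj
  omega

lemma unit_subset_X {C : Finset ℕ} (hC : C ∈ units r) : C ⊆ X r := by
  rw [mem_units hr] at hC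
  rcases hC with h | h | ⟨j, -, -, h⟩ <;> subst h
  · exact V1_subset_X hr
  · exact V2_subset_X hr
  · exact row_subset_X hr

lemma unit_card_ge {C : Finset ℕ} (hC : C ∈ units r) : r - 1 ≤ C.card := by
  rw [mem_units hr] at hC
  rcases hC with h | h | ⟨j, hj1, hj2, h⟩ <;> subst h
  · rw [card_V1 hr]
  · rw [card_V2 hr]
  · exact card_row_ge hr hj2

lemma unit_card_le {C : Finset ℕ} (hC : C ∈ units r) : C.card ≤ r := by
  rw [mem_units hr] at hC
  rcases hC with h | h | ⟨j, hj1, hj2, h⟩ <;> subst h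
  · rw [card_V1 hr]; omega
  · rw [card_V2 hr]; omega
  · exact card_row_le hr

lemma unit_nonempty {C : Finset ℕ} (hC : C ∈ units r) : C.Nonempty := by
  rw [← Finset.card_pos]
  have := unit_card_ge hr hC
  omega

lemma zero_r_not_mem_unit {C : Finset ℕ} (hC : C ∈ units r) : 0 ∉ C ∧ r ∉ C := by
  rw [mem_units hr] at hC
  rcases hC with h | h | ⟨j, hj1, hj2, h⟩ <;> subst h
  · rw [mem_V1 hr, mem_V1 hr]; omega
  · rw [mem_V2 hr, mem_V2 hr]; omega
  · constructor <;> intro hmem <;> have := row_elem_big hr hj1 hmem <;> omega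

lemma cell_cover {v : ℕ} (hv : v ∈ X r) :
    v = 0 ∨ v = r ∨ ∃ C ∈ units r, v ∈ C := by
  have hrow := mem_row_self hr hv
  have hlt := rowIdx_lt hr hv
  by_cases h2 : 2 ≤ v / r
  · refine Or.inr (Or.inr ⟨row r (v / r), ?_, hrow⟩)
    rw [mem_units hr]
    exact Or.inr (Or.inr ⟨v / r, h2, hlt, rfl⟩)
  · have hv2 : v < 2 * r := by
      rw [mem_row hr] at hrow
      have h3 : v < (v / r + 1) * r := lt_of_lt_of_le hrow.2 (min_le_left _ _)
      have : (v / r + 1) * r ≤ 2 * r := Nat.mul_le_mul_right r (by omega)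
      omega
    rcases Nat.lt_or_ge v 1 with h | h
    · exact Or.inl (by omega)
    rcases Nat.lt_or_ge v (r-1) with h' | h'
    · exact Or.inr (Or.inr ⟨V1 r, by rw [mem_units hr]; exact Or.inl rfl,
        by rw [mem_V1 hr]; omega⟩)
    rcases Nat.eq_or_lt_of_le h' with h'' | h''
    · exact Or.inr (Or.inr ⟨V2 r, by rw [mem_units hr]; exact Or.inr (Or.inl rfl),
        by rw [mem_V2 hr]; omega⟩)
    rcases Nat.lt_or_ge v (r+1) with h3 | h3
    · exact Or.inr (Or.inl (by omega))
    rcases Nat.lt_or_ge v (2*r-1) with h4 | h4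
    · exact Or.inr (Or.inr ⟨V2 r, by rw [mem_units hr]; exact Or.inr (Or.inl rfl),
        by rw [mem_V2 hr]; omega⟩)
    · exact Or.inr (Or.inr ⟨V1 r, by rw [mem_units hr]; exact Or.inl rfl,
        by rw [mem_V1 hr]; omega⟩)

end Basic2

section Basic3
variable {r : ℕ} (hr : 6 ≤ r)
include hr

lemma mem_P1 {C : Finset ℕ} : C ∈ P1 r ↔ C = {0} ∨ C = {r} ∨ C ∈ units r := by
  unfold P1; simp only [Finset.mem_insert]

lemma mem_P2 {C : Finset ℕ} : C ∈ P2 r ↔ C = {0, r} ∨ C ∈ units r := by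
  unfold P2; simp only [Finset.mem_insert]

lemma mem_P3 {C : Finset ℕ} : C ∈ P3 r ↔ ∃ i, i < r - 1 ∧ C = row r i := by
  unfold P3
  simp only [Finset.mem_image, Finset.mem_range]
  constructor
  · rintro ⟨i, h1, h2⟩; exact ⟨i, h1, h2.symm⟩
  · rintro ⟨i, h1, h2⟩; exact ⟨i, h1, h2.symm⟩

/-- given membership in a unit, that unit is determined -/
lemma unit_eq_of_mem {C D : Finset ℕ} (hC : C ∈ units r) (hD : D ∈ units r)
    {v : ℕ} (hvC : v ∈ C) (hvD : v ∈ D) : C = D := by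
  rw [mem_units hr] at hC hD
  have hV12 : ∀ w, w ∈ V1 r → w ∉ V2 r := by
    intro w h1 h2; rw [mem_V1 hr] at h1; rw [mem_V2 hr] at h2; omega
  have hV1row : ∀ w j, 2 ≤ j → w ∈ V1 r → w ∉ row r j := by
    intro w j hj h1 h2
    rw [mem_V1 hr] at h1
    have := row_elem_big hr hj h2
    omega
  have hV2row : ∀ w j, 2 ≤ j → w ∈ V2 r → w ∉ row r j := by
    intro w j hj h1 h2
    rw [mem_V2 hr] at h1
    have := row_elem_big hr hj h2
    omega
  rcases hC with h | h | ⟨j, hj1, hj2, h⟩ <;> subst h <;>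
    rcases hD with h | h | ⟨j', hj1', hj2', h⟩ <;> subst h
  · rfl
  · exact absurd hvD (hV12 v hvC)
  · exact absurd hvD (hV1row v j' hj1' hvC)
  · exact absurd hvC (hV12 v hvD)
  · rfl
  · exact absurd hvD (hV2row v j' hj1' hvC)
  · exact absurd hvC (hV1row v j hj1 hvD)
  · exact absurd hvC (hV2row v j hj1 hvD)
  · have := rowIdx_eq hr hvC; have := rowIdx_eq hr hvD
    have : j = j' := by omega
    rw [this]

lemma P1_partition : IsPartition r (P1 r) := by
  have hn := n_big hr
  refine ⟨?_, ?_, ?_⟩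
  · intro C hC
    rw [mem_P1 hr] at hC
    rcases hC with h | h | h
    · subst h; exact ⟨0, Finset.mem_singleton_self 0⟩
    · subst h; exact ⟨r, Finset.mem_singleton_self r⟩
    · exact unit_nonempty hr h
  · intro C hC
    rw [mem_P1 hr] at hC
    rcases hC with h | h | h
    · subst h; intro v hv; rw [Finset.mem_singleton] at hv; subst hv
      rw [mem_X hr]; omega
    · subst h; intro v hv; rw [Finset.mem_singleton] at hv; subst hv
      rw [mem_X hr]; omega
    · exact unit_subset_X hr h
  · intro v hv
    have hcov := cell_cover hr hv
    have huniq : ∀ C D, C ∈ P1 r → D ∈ P1 r → v ∈ C → v ∈ D → C = D := by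
      intro C D hC hD hvC hvD
      rw [mem_P1 hr] at hC hD
      rcases hC with h | h | hCu <;> [skip; skip; skip] <;>
        rcases hD with h' | h' | hDu
      · subst h; subst h'; rfl
      · subst h; subst h'
        rw [Finset.mem_singleton] at hvC hvD; omega
      · subst h; rw [Finset.mem_singleton] at hvC; subst hvC
        exact absurd hvD (zero_r_not_mem_unit hr hDu).1
      · subst h; subst h'
        rw [Finset.mem_singleton] at hvC hvD; omega
      · subst h; subst h'; rfl
      · subst h; rw [Finset.mem_singleton] at hvC; subst hvC
        exact absurd hvD (zero_r_not_mem_unit hr hDu).2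
      · subst h'; rw [Finset.mem_singleton] at hvD; subst hvD
        exact absurd hvC (zero_r_not_mem_unit hr hCu).1
      · subst h'; rw [Finset.mem_singleton] at hvD; subst hvD
        exact absurd hvC (zero_r_not_mem_unit hr hCu).2
      · exact unit_eq_of_mem hr hCu hDu hvC hvD
    rcases hcov with h | h | ⟨C, hC, hvC⟩
    · subst h
      refine ⟨{0}, ⟨by rw [mem_P1 hr]; exact Or.inl rfl, Finset.mem_singleton_self 0⟩, ?_⟩
      rintro D ⟨hD, hvD⟩
      exact huniq D {0} hD (by rw [mem_P1 hr]; exact Or.inl rfl) hvD (Finset.mem_singleton_self 0)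
    · refine ⟨({r} : Finset ℕ), ⟨by rw [mem_P1 hr]; exact Or.inr (Or.inl rfl), by rw [h]; exact Finset.mem_singleton_self r⟩, ?_⟩
      rintro D ⟨hD, hvD⟩
      exact huniq D ({r} : Finset ℕ) hD (by rw [mem_P1 hr]; exact Or.inr (Or.inl rfl)) hvD (by rw [h]; exact Finset.mem_singleton_self r)
    · refine ⟨C, ⟨by rw [mem_P1 hr]; exact Or.inr (Or.inr hC), hvC⟩, ?_⟩
      rintro D ⟨hD, hvD⟩
      exact huniq D C hD (by rw [mem_P1 hr]; exact Or.inr (Or.inr hC)) hvD hvC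

lemma P2_partition : IsPartition r (P2 r) := by
  have hn := n_big hr
  refine ⟨?_, ?_, ?_⟩
  · intro C hC
    rw [mem_P2 hr] at hC
    rcases hC with h | h
    · subst h; exact ⟨0, by simp⟩
    · exact unit_nonempty hr h
  · intro C hC
    rw [mem_P2 hr] at hC
    rcases hC with h | h
    · subst h; intro v hv
      simp only [Finset.mem_insert, Finset.mem_singleton] at hv
      rw [mem_X hr]; omega
    · exact unit_subset_X hr h
  · intro v hv
    have hcov := cell_cover hr hv
    have hz : ∀ w, (w = 0 ∨ w = r) → w ∈ ({0, r} : Finset ℕ) := by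
      intro w hw; simp only [Finset.mem_insert, Finset.mem_singleton]; tauto
    have huniq : ∀ C D, C ∈ P2 r → D ∈ P2 r → v ∈ C → v ∈ D → C = D := by
      intro C D hC hD hvC hvD
      rw [mem_P2 hr] at hC hD
      rcases hC with h | hCu <;> rcases hD with h' | hDu
      · subst h; subst h'; rfl
      · subst h
        simp only [Finset.mem_insert, Finset.mem_singleton] at hvC
        have := zero_r_not_mem_unit hr hDu
        rcases hvC with h | h <;> subst h <;> tauto
      · subst h'
        simp only [Finset.mem_insert, Finset.mem_singleton] at hvD
        have := zero_r_not_mem_unit hr hCu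
        rcases hvD with h | h <;> subst h <;> tauto
      · exact unit_eq_of_mem hr hCu hDu hvC hvD
    rcases hcov with h | h | ⟨C, hC, hvC⟩
    · refine ⟨{0, r}, ⟨by rw [mem_P2 hr]; exact Or.inl rfl, hz v (Or.inl h)⟩, ?_⟩
      rintro D ⟨hD, hvD⟩
      exact huniq D {0,r} hD (by rw [mem_P2 hr]; exact Or.inl rfl) hvD (hz v (Or.inl h))
    · refine ⟨{0, r}, ⟨by rw [mem_P2 hr]; exact Or.inl rfl, hz v (Or.inr h)⟩, ?_⟩
      rintro D ⟨hD, hvD⟩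
      exact huniq D {0,r} hD (by rw [mem_P2 hr]; exact Or.inl rfl) hvD (hz v (Or.inr h))
    · refine ⟨C, ⟨by rw [mem_P2 hr]; exact Or.inr hC, hvC⟩, ?_⟩
      rintro D ⟨hD, hvD⟩
      exact huniq D C hD (by rw [mem_P2 hr]; exact Or.inr hC) hvD hvC

lemma row_nonempty {i : ℕ} (hi : i < r - 1) : (row r i).Nonempty := by
  rw [← Finset.card_pos]
  have := card_row_ge hr hi
  omega

lemma P3_partition : IsPartition r (P3 r) := by
  refine ⟨?_, ?_, ?_⟩
  · intro C hC
    rw [mem_P3 hr] at hC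
    obtain ⟨i, hi, h⟩ := hC; subst h
    exact row_nonempty hr hi
  · intro C hC
    rw [mem_P3 hr] at hC
    obtain ⟨i, hi, h⟩ := hC; subst h
    exact row_subset_X hr
  · intro v hv
    refine ⟨row r (v / r), ⟨?_, mem_row_self hr hv⟩, ?_⟩
    · rw [mem_P3 hr]; exact ⟨v / r, rowIdx_lt hr hv, rfl⟩
    · rintro D ⟨hD, hvD⟩
      rw [mem_P3 hr] at hD
      obtain ⟨i, hi, h⟩ := hD; subst h
      rw [rowIdx_eq hr hvD]

end Basic3

section Basic4
variable {r : ℕ} (hr : 6 ≤ r)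
include hr

lemma row_index_inj {i j : ℕ} (hi : i < r - 1) (hj : j < r - 1)
    (h : row r i = row r j) : i = j := by
  obtain ⟨v, hv⟩ := row_nonempty hr hi
  have hv' : v ∈ row r j := h ▸ hv
  have := rowIdx_eq hr hv
  have := rowIdx_eq hr hv'
  omega

lemma one_mem_V1 : (1 : ℕ) ∈ V1 r := by rw [mem_V1 hr]; omega
lemma last_mem_V1 : 2 * r - 1 ∈ V1 r := by rw [mem_V1 hr]; omega
lemma rm1_mem_V2 : r - 1 ∈ V2 r := by rw [mem_V2 hr]; omega
lemma rp1_mem_V2 : r + 1 ∈ V2 r := by rw [mem_V2 hr]; omega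

lemma V1_ne_row {j : ℕ} (hj : 2 ≤ j) : V1 r ≠ row r j := by
  intro h
  have h1 : (1:ℕ) ∈ row r j := h ▸ one_mem_V1 hr
  have := row_elem_big hr hj h1
  omega

lemma V2_ne_row {j : ℕ} (hj : 2 ≤ j) : V2 r ≠ row r j := by
  intro h
  have h1 : r - 1 ∈ row r j := h ▸ rm1_mem_V2 hr
  have := row_elem_big hr hj h1
  omega

lemma V1_ne_V2 : V1 r ≠ V2 r := by
  intro h
  have h1 : (1:ℕ) ∈ V2 r := h ▸ one_mem_V1 hr
  rw [mem_V2 hr] at h1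
  omega

lemma card_units : (units r).card = r - 1 := by
  unfold units
  rw [Finset.card_insert_of_notMem, Finset.card_insert_of_notMem,
    Finset.card_image_of_injOn, Nat.card_Ico]
  · omega
  · intro i hi j hj hij
    rw [Finset.mem_coe, Finset.mem_Ico] at hi hj
    exact row_index_inj hr (by omega) (by omega) hij
  · rw [Finset.mem_image]
    rintro ⟨j, hj, h⟩
    rw [Finset.mem_Ico] at hj
    exact V2_ne_row hr hj.1 h.symm
  · rw [Finset.mem_insert, Finset.mem_image]
    rintro (h | ⟨j, hj, h⟩)
    · exact V1_ne_V2 hr h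
    · rw [Finset.mem_Ico] at hj
      exact V1_ne_row hr hj.1 h.symm

lemma singleton_not_unit {w : ℕ} : ({w} : Finset ℕ) ∉ units r := by
  intro h
  have := unit_card_ge hr h
  rw [Finset.card_singleton] at this
  omega

lemma pair_not_unit : ({0, r} : Finset ℕ) ∉ units r := by
  intro h
  have := unit_card_ge hr h
  have h2 : ({0, r} : Finset ℕ).card ≤ 2 := Finset.card_insert_le 0 {r} |>.trans (by simp)
  omega

lemma card_P1 : (P1 r).card = r + 1 := by
  unfold P1
  rw [Finset.card_insert_of_notMem, Finset.card_insert_of_notMem, card_units hr]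
  · omega
  · exact singleton_not_unit hr
  · rw [Finset.mem_insert]
    rintro (h | h)
    · have : (0:ℕ) ∈ ({r} : Finset ℕ) := h ▸ Finset.mem_singleton_self 0
      rw [Finset.mem_singleton] at this; omega
    · exact singleton_not_unit hr h

lemma card_P2 : (P2 r).card = r := by
  unfold P2
  rw [Finset.card_insert_of_notMem (pair_not_unit hr), card_units hr]
  omega

lemma card_P3 : (P3 r).card = r - 1 := by
  unfold P3
  rw [Finset.card_image_of_injOn, Finset.card_range]
  intro i hi j hj hij
  rw [Finset.mem_coe, Finset.mem_range] at hi hj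
  exact row_index_inj hr hi hj hij

/-- a partition satisfying the strict-coloring conditions for all edges -/
def GoodPartition (r : ℕ) (Q : Finset (Finset ℕ)) : Prop :=
  IsPartition r Q ∧ ∀ e, IsEdge r e →
    (∃ C ∈ Q, 2 ≤ (e ∩ C).card) ∧
    (∃ a ∈ e, ∃ b ∈ e, ∃ C ∈ Q, ∃ D ∈ Q, C ≠ D ∧ a ∈ C ∧ b ∈ D)

omit hr in
lemma no_edge_in_class {Q : Finset (Finset ℕ)} (hQ : GoodPartition r Q)
    {B e : Finset ℕ} (hB : B ∈ Q) (he : IsEdge r e) (heB : e ⊆ B) : False := by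
  obtain ⟨a, ha, b, hb, C, hC, D, hD, hCD, haC, hbD⟩ := (hQ.2 e he).2
  have h1 : C = B := part_unique hQ.1 hC hB haC (heB ha)
  have h2 : D = B := part_unique hQ.1 hD hB hbD (heB hb)
  exact hCD (h1.trans h2.symm)

lemma exists_edge_in {B : Finset ℕ} (hB : B ⊆ X r) (hBc : r ≤ B.card)
    {C : Finset ℕ} {a b c d : ℕ} (hC : C ∈ units r)
    (ha : a ∈ B) (hb : b ∈ B) (hab : a ≠ b) (haC : a ∈ C) (hbC : b ∈ C)
    (hc : c ∈ B) (hd : d ∈ B) (hcd : c / r ≠ d / r) :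
    ∃ e, IsEdge r e ∧ e ⊆ B := by
  classical
  set s : Finset ℕ := insert a (insert b (insert c {d})) with hs
  have hsB : s ⊆ B := by
    intro v hv
    simp only [hs, Finset.mem_insert, Finset.mem_singleton] at hv
    rcases hv with h|h|h|h <;> subst h <;> assumption
  have hscard : s.card ≤ r := by
    have : s.card ≤ 4 := by
      refine (Finset.card_insert_le _ _).trans ?_
      refine Nat.succ_le_succ ?_
      refine (Finset.card_insert_le _ _).trans ?_
      refine Nat.succ_le_succ ?_
      refine (Finset.card_insert_le _ _).trans (by simp)
    omega
  obtain ⟨e, hse, heB, hecard⟩ := Finset.exists_subsuperset_card_eq hsB hscard hBc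
  have hmem : ∀ v, v ∈ s → v ∈ e := fun v hv => hse hv
  refine ⟨e, ⟨heB.trans hB, hecard, ?_, ⟨C, hC, ?_⟩⟩, heB⟩
  · intro i hi hsub
    have hce : c ∈ e := hmem c (by simp [hs])
    have hde : d ∈ e := hmem d (by simp [hs])
    have h1 := rowIdx_eq hr (hsub hce)
    have h2 := rowIdx_eq hr (hsub hde)
    omega
  · have hab2 : (insert a {b} : Finset ℕ) ⊆ e ∩ C := by
      intro v hv
      simp only [Finset.mem_insert, Finset.mem_singleton] at hv
      rcases hv with h|h <;> subst h <;>
        exact Finset.mem_inter.mpr ⟨hmem _ (by simp [hs]), by assumption⟩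
    have : (insert a {b} : Finset ℕ).card = 2 := by
      rw [Finset.card_insert_of_notMem (by simp [hab]), Finset.card_singleton]
    calc 2 = (insert a {b} : Finset ℕ).card := this.symm
    _ ≤ (e ∩ C).card := Finset.card_le_card hab2

lemma not_subset_row_pair {B : Finset ℕ} (hB : B ⊆ X r) (hne : B.Nonempty)
    (hnr : ∀ i, i < r - 1 → ¬ B ⊆ row r i) :
    ∃ c ∈ B, ∃ d ∈ B, c / r ≠ d / r := by
  obtain ⟨c, hc⟩ := hne
  have hi := rowIdx_lt hr (hB hc)
  obtain ⟨d, hd, hdn⟩ := Finset.not_subset.mp (hnr (c / r) hi)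
  refine ⟨c, hc, d, hd, fun h => hdn ?_⟩
  rw [h]
  exact mem_row_self hr (hB hd)

lemma inter_singleton_card_le (B : Finset ℕ) (w : ℕ) : (B ∩ {w}).card ≤ 1 := by
  refine (Finset.card_le_card (Finset.inter_subset_right)).trans (by simp)

lemma class_card_structure {Q : Finset (Finset ℕ)} (hQ : GoodPartition r Q)
    {B : Finset ℕ} (hB : B ∈ Q) :
    B.card ≤ r + 1 ∧ (r ≤ B.card →
      ((∃ i, i < r - 1 ∧ B = row r i) ∨ ∀ C ∈ units r, (B ∩ C).card ≤ 1)) := by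
  have hBX : B ⊆ X r := hQ.1.2.1 B hB
  have hne : B.Nonempty := hQ.1.1 B hB
  have key : r ≤ B.card →
      ((∃ i, i < r - 1 ∧ B = row r i) ∨ ∀ C ∈ units r, (B ∩ C).card ≤ 1) := by
    intro hBc
    by_cases hrow : ∃ i, i < r - 1 ∧ B ⊆ row r i
    · obtain ⟨i, hi, hsub⟩ := hrow
      exact Or.inl ⟨i, hi, Finset.eq_of_subset_of_card_le hsub
        ((card_row_le hr).trans hBc)⟩
    · push_neg at hrow
      right
      intro C hC
      by_contra hcon
      have h2 : 2 ≤ (B ∩ C).card := by omega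
      obtain ⟨a, ha, b, hb, hab⟩ := Finset.one_lt_card.mp h2
      rw [Finset.mem_inter] at ha hb
      obtain ⟨c, hc, d, hd, hcd⟩ := not_subset_row_pair hr hBX hne hrow
      obtain ⟨e, he, heB⟩ := exists_edge_in hr hBX hBc hC ha.1 hb.1 hab ha.2 hb.2 hc hd hcd
      exact no_edge_in_class hQ hB he heB
  refine ⟨?_, key⟩
  by_cases hBc : r ≤ B.card
  · rcases key hBc with ⟨i, hi, hBr⟩ | htr
    · rw [hBr]
      have := card_row_le (i := i) hr
      omega
    · have hsum : ∑ C ∈ P1 r, (B ∩ C).card = B.card :=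
        part_sum_inter (P1_partition hr) hBX
      have hbound : ∀ C ∈ P1 r, (B ∩ C).card ≤ 1 := by
        intro C hC
        rw [mem_P1 hr] at hC
        rcases hC with h | h | h
        · subst h; exact inter_singleton_card_le hr B 0
        · subst h; exact inter_singleton_card_le hr B r
        · exact htr C h
      have := Finset.sum_le_card_nsmul (P1 r) (fun C => (B ∩ C).card) 1 hbound
      rw [hsum, card_P1 hr, smul_eq_mul, mul_one] at this
      exact this
  · omega

end Basic4

section Basic5
variable {r : ℕ} (hr : 6 ≤ r)
include hr

omit hr in
lemma exists_two_classes {Q : Finset (Finset ℕ)} (hQ : IsPartition r Q) {e : Finset ℕ}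
    (heX : e ⊆ X r) (hne : e.Nonempty) (hnm : ∀ C ∈ Q, ¬ e ⊆ C) :
    ∃ a ∈ e, ∃ b ∈ e, ∃ C ∈ Q, ∃ D ∈ Q, C ≠ D ∧ a ∈ C ∧ b ∈ D := by
  obtain ⟨a, ha⟩ := hne
  obtain ⟨C, ⟨hC, haC⟩, -⟩ := hQ.2.2 a (heX ha)
  obtain ⟨b, hb, hbn⟩ := Finset.not_subset.mp (hnm C hC)
  obtain ⟨D, ⟨hD, hbD⟩, -⟩ := hQ.2.2 b (heX hb)
  exact ⟨a, ha, b, hb, C, hC, D, hD, fun h => hbn (h ▸ hbD), haC, hbD⟩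

omit hr in
lemma edge_not_subset_small {e C : Finset ℕ} (h1 : e.card = r) (h2 : C.card < r) :
    ¬ e ⊆ C := fun hsub => absurd (Finset.card_le_card hsub) (by omega)

lemma edge_nonempty {e : Finset ℕ} (he : IsEdge r e) : e.Nonempty := by
  rw [← Finset.card_pos, he.2.1]; omega

lemma edge_not_subset_P1 {e C : Finset ℕ} (he : IsEdge r e) (hC : C ∈ P1 r) : ¬ e ⊆ C := by
  rw [mem_P1 hr] at hC
  rcases hC with h | h | h
  · subst h; exact edge_not_subset_small he.2.1 (by simp; omega)
  · subst h; exact edge_not_subset_small he.2.1 (by simp; omega)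
  · rw [mem_units hr] at h
    rcases h with h | h | ⟨j, hj1, hj2, h⟩
    · subst h; exact edge_not_subset_small he.2.1 (by rw [card_V1 hr]; omega)
    · subst h; exact edge_not_subset_small he.2.1 (by rw [card_V2 hr]; omega)
    · subst h; exact he.2.2.1 j hj2

lemma edge_not_subset_P2 {e C : Finset ℕ} (he : IsEdge r e) (hC : C ∈ P2 r) : ¬ e ⊆ C := by
  rw [mem_P2 hr] at hC
  rcases hC with h | h
  · subst h
    refine edge_not_subset_small he.2.1 ?_
    have h2 : ({0, r} : Finset ℕ).card ≤ 2 :=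
      (Finset.card_insert_le _ _).trans (by rw [Finset.card_singleton])
    omega
  · exact edge_not_subset_P1 hr he (by rw [mem_P1 hr]; exact Or.inr (Or.inr h))

lemma edge_not_subset_P3 {e C : Finset ℕ} (he : IsEdge r e) (hC : C ∈ P3 r) : ¬ e ⊆ C := by
  rw [mem_P3 hr] at hC
  obtain ⟨i, hi, h⟩ := hC; subst h
  exact he.2.2.1 i hi

lemma P1_good : GoodPartition r (P1 r) := by
  refine ⟨P1_partition hr, fun e he => ⟨?_, ?_⟩⟩
  · obtain ⟨C, hC, h2⟩ := he.2.2.2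
    exact ⟨C, by rw [mem_P1 hr]; exact Or.inr (Or.inr hC), h2⟩
  · exact exists_two_classes (P1_partition hr) he.1 (edge_nonempty hr he)
      (fun C hC => edge_not_subset_P1 hr he hC)

lemma P2_good : GoodPartition r (P2 r) := by
  refine ⟨P2_partition hr, fun e he => ⟨?_, ?_⟩⟩
  · obtain ⟨C, hC, h2⟩ := he.2.2.2
    exact ⟨C, by rw [mem_P2 hr]; exact Or.inr hC, h2⟩
  · exact exists_two_classes (P2_partition hr) he.1 (edge_nonempty hr he)
      (fun C hC => edge_not_subset_P2 hr he hC)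

lemma P3_good : GoodPartition r (P3 r) := by
  refine ⟨P3_partition hr, fun e he => ⟨?_, ?_⟩⟩
  · by_contra hcon
    push_neg at hcon
    have hsum := part_sum_inter (P3_partition hr) he.1
    have hb := Finset.sum_le_card_nsmul (P3 r) (fun C => (e ∩ C).card) 1
      (fun C hC => show (e ∩ C).card ≤ 1 by have := hcon C hC; omega)
    rw [hsum, card_P3 hr, smul_eq_mul, mul_one] at hb
    have := he.2.1
    omega
  · exact exists_two_classes (P3_partition hr) he.1 (edge_nonempty hr he)
      (fun C hC => edge_not_subset_P3 hr he hC)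

end Basic5

section BigK
variable {r : ℕ} (hr : 6 ≤ r)
include hr

lemma n_big3 : 3 * r + 2 < n r := by
  have h1 := n_eq hr
  have h2 := rsq hr
  omega

/-- choice of an element of a finset -/
noncomputable def pick (D : Finset ℕ) : ℕ :=
  if h : D = ∅ then 0 else D.min' (Finset.nonempty_of_ne_empty h)

omit hr in
lemma pick_mem {D : Finset ℕ} (hD : D.Nonempty) : pick D ∈ D := by
  unfold pick
  rw [dif_neg (Finset.nonempty_iff_ne_empty.mp hD)]
  exact Finset.min'_mem _ _

lemma build_rainbow {Q S : Finset (Finset ℕ)} (hQ : GoodPartition r Q) (hSQ : S ⊆ Q)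
    (hScard : S.card = r) (g : Finset ℕ → ℕ) (hg : ∀ D ∈ S, g D ∈ D)
    (hwit : ∃ C ∈ units r, ∃ D1 ∈ S, ∃ D2 ∈ S, D1 ≠ D2 ∧ g D1 ∈ C ∧ g D2 ∈ C)
    (hrows : ∃ D1 ∈ S, ∃ D2 ∈ S, g D1 / r ≠ g D2 / r) : False := by
  classical
  have hginj : ∀ D1 ∈ S, ∀ D2 ∈ S, g D1 = g D2 → D1 = D2 := by
    intro D1 h1 D2 h2 heq
    exact part_unique hQ.1 (hSQ h1) (hSQ h2) (hg D1 h1) (heq ▸ hg D2 h2)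
  set e : Finset ℕ := S.image g with he
  have hecard : e.card = r := by
    rw [he, Finset.card_image_of_injOn (fun D1 h1 D2 h2 => hginj D1 h1 D2 h2), hScard]
  have heX : e ⊆ X r := by
    intro v hv
    rw [he, Finset.mem_image] at hv
    obtain ⟨D, hD, hgD⟩ := hv
    exact hQ.1.2.1 D (hSQ hD) (hgD ▸ hg D hD)
  have hisedge : IsEdge r e := by
    refine ⟨heX, hecard, ?_, ?_⟩
    · intro i hi hsub
      obtain ⟨D1, h1, D2, h2, hne⟩ := hrows
      have m1 : g D1 ∈ e := Finset.mem_image_of_mem g h1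
      have m2 : g D2 ∈ e := Finset.mem_image_of_mem g h2
      have := rowIdx_eq hr (hsub m1)
      have := rowIdx_eq hr (hsub m2)
      omega
    · obtain ⟨C, hC, D1, h1, D2, h2, hD12, hg1, hg2⟩ := hwit
      refine ⟨C, hC, ?_⟩
      have hsub : (insert (g D1) {g D2} : Finset ℕ) ⊆ e ∩ C := by
        intro v hv
        simp only [Finset.mem_insert, Finset.mem_singleton] at hv
        rcases hv with h | h <;> subst h <;>
          exact Finset.mem_inter.mpr ⟨Finset.mem_image_of_mem g (by assumption), by assumption⟩
      have hne : g D1 ≠ g D2 := fun h => hD12 (hginj D1 h1 D2 h2 h)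
      have h2' : (insert (g D1) {g D2} : Finset ℕ).card = 2 := by
        rw [Finset.card_insert_of_notMem (by simp [hne]), Finset.card_singleton]
      calc 2 = _ := h2'.symm
      _ ≤ (e ∩ C).card := Finset.card_le_card hsub
  obtain ⟨D, hD, hcard2⟩ := (hQ.2 e hisedge).1
  have : (e ∩ D).card ≤ 1 := by
    rw [Finset.card_le_one]
    intro v hv w hw
    rw [Finset.mem_inter, he, Finset.mem_image] at hv hw
    obtain ⟨⟨D1, h1, hv1⟩, hvD⟩ := hv
    obtain ⟨⟨D2, h2, hw1⟩, hwD⟩ := hw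
    have e1 : D1 = D := part_unique hQ.1 (hSQ h1) hD (hg D1 h1) (hv1 ▸ hvD)
    have e2 : D2 = D := part_unique hQ.1 (hSQ h2) hD (hg D2 h2) (hw1 ▸ hwD)
    rw [← hv1, ← hw1, e1, e2]
  omega

lemma unit_pair_same_class {Q : Finset (Finset ℕ)} (hQ : GoodPartition r Q)
    (hk : r ≤ Q.card) {C : Finset ℕ} (hC : C ∈ units r) {a b : ℕ}
    (ha : a ∈ C) (hb : b ∈ C) {A B' : Finset ℕ} (hA : A ∈ Q) (hB' : B' ∈ Q)
    (haA : a ∈ A) (hbB : b ∈ B') : A = B' := by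
  classical
  by_contra hAB
  have hab : a ≠ b := by
    intro h; subst h
    exact hAB (part_unique hQ.1 hA hB' haA hbB)
  have hcardle : ∀ D ∈ Q, D.card ≤ r + 1 := fun D hD => (class_card_structure hr hQ hD).1
  -- find a third class with an element in another row, unless a,b already differ
  have hmain : ∀ (D₀ : Finset ℕ) (c₀ : ℕ), D₀ ∈ Q → (D₀ = A ∨ D₀ = B' ∨ (D₀ ≠ A ∧ D₀ ≠ B')) →
      c₀ ∈ D₀ → (g0 : (if D₀ = A then a else if D₀ = B' then b else c₀) = c₀) →
      (a / r ≠ c₀ / r ∨ b / r ≠ c₀ / r ∨ a / r ≠ b / r) → True := fun _ _ _ _ _ _ _ => trivial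
  by_cases hrow : a / r = b / r
  · -- same row; find third class reaching outside this row
    have hex : ∃ D₀ ∈ Q, D₀ ≠ A ∧ D₀ ≠ B' ∧ ∃ c₀ ∈ D₀, c₀ / r ≠ a / r := by
      by_contra hno
      push_neg at hno
      have hsub : X r \ row r (a / r) ⊆ A ∪ B' := by
        intro v hv
        rw [Finset.mem_sdiff] at hv
        obtain ⟨D, ⟨hD, hvD⟩, -⟩ := hQ.1.2.2 v hv.1
        rw [Finset.mem_union]
        by_cases h1 : D = A
        · exact Or.inl (h1 ▸ hvD)
        by_cases h2 : D = B'
        · exact Or.inr (h2 ▸ hvD)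
        exfalso
        have := hno D hD h1 h2 v hvD
        exact hv.2 (this ▸ mem_row_self hr hv.1)
      have hc1 : (X r \ row r (a / r)).card = n r - (row r (a/r)).card := by
        rw [Finset.card_sdiff_of_subset (row_subset_X hr)]
        rw [show (X r).card = n r from Finset.card_range _]
      have hc2 : (A ∪ B').card ≤ (r + 1) + (r + 1) :=
        (Finset.card_union_le _ _).trans (by
          have := hcardle A hA; have := hcardle B' hB'; omega)
      have := Finset.card_le_card hsub
      have hrle : (row r (a/r)).card ≤ r := card_row_le hr
      have := n_big3 hr
      omega
    obtain ⟨D₀, hD₀, hD₀A, hD₀B, c₀, hc₀, hc₀row⟩ := hex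
    have hbase : (insert A (insert B' {D₀}) : Finset (Finset ℕ)) ⊆ Q := by
      intro D hD
      simp only [Finset.mem_insert, Finset.mem_singleton] at hD
      rcases hD with h|h|h <;> subst h <;> assumption
    have hbc : (insert A (insert B' {D₀}) : Finset (Finset ℕ)).card ≤ r := by
      have : (insert A (insert B' {D₀}) : Finset (Finset ℕ)).card ≤ 3 := by
        refine (Finset.card_insert_le _ _).trans ?_
        refine Nat.succ_le_succ ?_
        exact (Finset.card_insert_le _ _).trans (by simp)
      omega
    obtain ⟨S, hbS, hSQ, hScard⟩ := Finset.exists_subsuperset_card_eq hbase hbc hk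
    set g : Finset ℕ → ℕ := fun D =>
      if D = A then a else if D = B' then b else if D = D₀ then c₀ else pick D with hg
    have hgA : g A = a := by simp [hg]
    have hgB : g B' = b := by simp [hg, Ne.symm hAB, hAB]
    have hgD0 : g D₀ = c₀ := by simp [hg, hD₀A, hD₀B]
    have hAS : A ∈ S := hbS (by simp)
    have hBS : B' ∈ S := hbS (by simp)
    have hDS : D₀ ∈ S := hbS (by simp)
    refine build_rainbow hr hQ hSQ hScard g ?_ ?_ ?_
    · intro D hD
      rw [hg]
      dsimp only
      split
      · next h => rw [h]; exact haA
      split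
      · next h => rw [h]; exact hbB
      split
      · next h => rw [h]; exact hc₀
      · exact pick_mem (hQ.1.1 D (hSQ hD))
    · exact ⟨C, hC, A, hAS, B', hBS, hAB, hgA ▸ ha, hgB ▸ hb⟩
    · exact ⟨A, hAS, D₀, hDS, by rw [hgA, hgD0]; omega⟩
  · -- a, b in different rows already
    have hbase : (insert A {B'} : Finset (Finset ℕ)) ⊆ Q := by
      intro D hD
      simp only [Finset.mem_insert, Finset.mem_singleton] at hD
      rcases hD with h|h <;> subst h <;> assumption
    have hbc : (insert A {B'} : Finset (Finset ℕ)).card ≤ r := by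
      have : (insert A {B'} : Finset (Finset ℕ)).card ≤ 2 :=
        (Finset.card_insert_le _ _).trans (by simp)
      omega
    obtain ⟨S, hbS, hSQ, hScard⟩ := Finset.exists_subsuperset_card_eq hbase hbc hk
    set g : Finset ℕ → ℕ := fun D =>
      if D = A then a else if D = B' then b else pick D with hg
    have hgA : g A = a := by simp [hg]
    have hgB : g B' = b := by simp [hg, Ne.symm hAB, hAB]
    have hAS : A ∈ S := hbS (by simp)
    have hBS : B' ∈ S := hbS (by simp)
    refine build_rainbow hr hQ hSQ hScard g ?_ ?_ ?_
    · intro D hD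
      rw [hg]
      dsimp only
      split
      · next h => rw [h]; exact haA
      split
      · next h => rw [h]; exact hbB
      · exact pick_mem (hQ.1.1 D (hSQ hD))
    · exact ⟨C, hC, A, hAS, B', hBS, hAB, hgA ▸ ha, hgB ▸ hb⟩
    · exact ⟨A, hAS, B', hBS, by rw [hgA, hgB]; exact hrow⟩

end BigK

section BigK2
variable {r : ℕ} (hr : 6 ≤ r)
include hr

lemma div_small {v : ℕ} (hv : v < r) : v / r = 0 := Nat.div_eq_of_lt hv

lemma div_mid {v : ℕ} (h1 : r ≤ v) (h2 : v < 2 * r) : v / r = 1 :=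
  Nat.div_eq_of_lt_le (by omega) (by omega)

lemma unit_mem_of_big {Q : Finset (Finset ℕ)} (hQ : GoodPartition r Q)
    (hk : r ≤ Q.card) {C : Finset ℕ} (hC : C ∈ units r) : C ∈ Q := by
  obtain ⟨a, ha⟩ := unit_nonempty hr hC
  have haX : a ∈ X r := unit_subset_X hr hC ha
  obtain ⟨A, ⟨hA, haA⟩, -⟩ := hQ.1.2.2 a haX
  have hCA : C ⊆ A := by
    intro b hb
    have hbX := unit_subset_X hr hC hb
    obtain ⟨B', ⟨hB', hbB⟩, -⟩ := hQ.1.2.2 b hbX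
    have heq := unit_pair_same_class hr hQ hk hC ha hb hA hB' haA hbB
    rw [heq]; exact hbB
  suffices h : A = C by rw [← h]; exact hA
  by_contra hne
  have hns : ¬ A ⊆ C := fun hsub => hne (Finset.Subset.antisymm hsub hCA)
  obtain ⟨c, hcA, hcC⟩ := Finset.not_subset.mp hns
  obtain ⟨s, hsC, hscard⟩ := Finset.exists_subset_card_eq
    (show r - 1 ≤ C.card from unit_card_ge hr hC)
  have hcs : c ∉ s := fun h => hcC (hsC h)
  set e : Finset ℕ := insert c s with he
  have hecard : e.card = r := by
    rw [he, Finset.card_insert_of_notMem hcs, hscard]; omega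
  have heA : e ⊆ A := by
    intro v hv
    rw [he, Finset.mem_insert] at hv
    rcases hv with h | h
    · exact h ▸ hcA
    · exact hCA (hsC h)
  have hsne : s.Nonempty := by rw [← Finset.card_pos, hscard]; omega
  have hse : s ⊆ e := Finset.subset_insert c s
  have hwit : 2 ≤ (e ∩ C).card := by
    have hsub : s ⊆ e ∩ C := fun v hv => Finset.mem_inter.mpr ⟨hse hv, hsC hv⟩
    have := Finset.card_le_card hsub
    omega
  have hnr : ∀ i, i < r - 1 → ¬ e ⊆ row r i := by
    have hCu := hC
    rw [mem_units hr] at hCu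
    rcases hCu with h | h | ⟨j, hj1, hj2, h⟩
    · have hseq : s = C := Finset.eq_of_subset_of_card_le hsC
        (by rw [hscard, h, card_V1 hr])
      intro i hi hsub
      have h1 : (1:ℕ) ∈ e := hse (by rw [hseq, h]; exact one_mem_V1 hr)
      have h2 : 2*r - 1 ∈ e := hse (by rw [hseq, h]; exact last_mem_V1 hr)
      have e1 := rowIdx_eq hr (hsub h1)
      have e2 := rowIdx_eq hr (hsub h2)
      have d1 : (1:ℕ) / r = 0 := div_small hr (by omega)
      have d2 : (2*r - 1) / r = 1 := div_mid hr (by omega) (by omega)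
      omega
    · have hseq : s = C := Finset.eq_of_subset_of_card_le hsC
        (by rw [hscard, h, card_V2 hr])
      intro i hi hsub
      have h1 : r - 1 ∈ e := hse (by rw [hseq, h]; exact rm1_mem_V2 hr)
      have h2 : r + 1 ∈ e := hse (by rw [hseq, h]; exact rp1_mem_V2 hr)
      have e1 := rowIdx_eq hr (hsub h1)
      have e2 := rowIdx_eq hr (hsub h2)
      have d1 : (r - 1) / r = 0 := div_small hr (by omega)
      have d2 : (r + 1) / r = 1 := div_mid hr (by omega) (by omega)
      omega
    · intro i hi hsub
      obtain ⟨u, hu⟩ := hsne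
      have hurow : u ∈ row r j := by rw [← h]; exact hsC hu
      have e1 := rowIdx_eq hr (hsub (hse hu))
      have e2 := rowIdx_eq hr hurow
      have hce : c ∈ e := by rw [he]; exact Finset.mem_insert_self c s
      have : c ∈ row r j := by
        have := hsub hce
        rw [show j = i by omega]
        exact this
      rw [← h] at this
      exact hcC this
  have hisedge : IsEdge r e := ⟨heA.trans (hQ.1.2.1 A hA), hecard, hnr, ⟨C, hC, hwit⟩⟩
  exact no_edge_in_class hQ hA hisedge heA

lemma mem_pair_01 {v : ℕ} : v ∈ ({0, r} : Finset ℕ) ↔ v = 0 ∨ v = r := by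
  simp only [Finset.mem_insert, Finset.mem_singleton]

lemma big_k {Q : Finset (Finset ℕ)} (hQ : GoodPartition r Q) (hk : r ≤ Q.card) :
    Q = P1 r ∨ Q = P2 r := by
  have hunits : ∀ C ∈ units r, C ∈ Q := fun C hC => unit_mem_of_big hr hQ hk hC
  have hnb := n_big hr
  have h0X : (0:ℕ) ∈ X r := by rw [mem_X hr]; omega
  have hrX : r ∈ X r := by rw [mem_X hr]; omega
  obtain ⟨B₀, ⟨hB₀, h0B⟩, -⟩ := hQ.1.2.2 0 h0X
  obtain ⟨Br, ⟨hBr, hrB⟩, -⟩ := hQ.1.2.2 r hrX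
  have hB₀sub : B₀ ⊆ {0, r} := by
    intro c hc
    have hcX := hQ.1.2.1 _ hB₀ hc
    rcases cell_cover hr hcX with h | h | ⟨C, hC, hcC⟩
    · rw [mem_pair_01 hr]; exact Or.inl h
    · rw [mem_pair_01 hr]; exact Or.inr h
    · exfalso
      have heq : B₀ = C := part_unique hQ.1 hB₀ (hunits C hC) hc hcC
      exact (zero_r_not_mem_unit hr hC).1 (heq ▸ h0B)
  have hBrsub : Br ⊆ {0, r} := by
    intro c hc
    have hcX := hQ.1.2.1 _ hBr hc
    rcases cell_cover hr hcX with h | h | ⟨C, hC, hcC⟩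
    · rw [mem_pair_01 hr]; exact Or.inl h
    · rw [mem_pair_01 hr]; exact Or.inr h
    · exfalso
      have heq : Br = C := part_unique hQ.1 hBr (hunits C hC) hc hcC
      exact (zero_r_not_mem_unit hr hC).2 (heq ▸ hrB)
  have hQsub : ∀ B ∈ Q, B = B₀ ∨ B = Br ∨ B ∈ units r := by
    intro B hB
    obtain ⟨v, hv⟩ := hQ.1.1 B hB
    rcases cell_cover hr (hQ.1.2.1 B hB hv) with h | h | ⟨C, hC, hvC⟩
    · exact Or.inl (part_unique hQ.1 hB hB₀ (h ▸ hv) h0B)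
    · exact Or.inr (Or.inl (part_unique hQ.1 hB hBr (h ▸ hv) hrB))
    · refine Or.inr (Or.inr ?_)
      have := part_unique hQ.1 hB (hunits C hC) hv hvC
      rw [this]; exact hC
  by_cases hBB : B₀ = Br
  · right
    have hB₀eq : B₀ = {0, r} := by
      apply Finset.Subset.antisymm hB₀sub
      intro v hv
      rw [mem_pair_01 hr] at hv
      rcases hv with h | h <;> subst h
      · exact h0B
      · rw [hBB]; exact hrB
    apply Finset.Subset.antisymm
    · intro B hB
      rcases hQsub B hB with h | h | h
      · rw [mem_P2 hr]; left; rw [h, hB₀eq]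
      · rw [mem_P2 hr]; left; rw [h, ← hBB, hB₀eq]
      · rw [mem_P2 hr]; right; exact h
    · intro B hB
      rw [mem_P2 hr] at hB
      rcases hB with h | h
      · rw [h, ← hB₀eq]; exact hB₀
      · exact hunits B h
  · left
    have hrnB : r ∉ B₀ := fun h => hBB (part_unique hQ.1 hB₀ hBr h hrB)
    have h0nB : 0 ∉ Br := fun h => hBB (part_unique hQ.1 hB₀ hBr h0B h)
    have hB₀eq : B₀ = {0} := by
      apply Finset.Subset.antisymm
      · intro v hv
        have h2 := hB₀sub hv
        rw [mem_pair_01 hr] at h2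
        rw [Finset.mem_singleton]
        rcases h2 with h | h
        · exact h
        · exact absurd (h ▸ hv) hrnB
      · intro v hv
        rw [Finset.mem_singleton] at hv
        exact hv ▸ h0B
    have hBreq : Br = ({r} : Finset ℕ) := by
      apply Finset.Subset.antisymm
      · intro v hv
        have h2 := hBrsub hv
        rw [mem_pair_01 hr] at h2
        rw [Finset.mem_singleton]
        rcases h2 with h | h
        · exact absurd (h ▸ hv) h0nB
        · exact h
      · intro v hv
        rw [Finset.mem_singleton] at hv
        exact hv ▸ hrB
    apply Finset.Subset.antisymm
    · intro B hB
      rcases hQsub B hB with h | h | h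
      · rw [mem_P1 hr]; left; rw [h, hB₀eq]
      · rw [mem_P1 hr]; right; left; rw [h, hBreq]
      · rw [mem_P1 hr]; right; right; exact h
    · intro B hB
      rw [mem_P1 hr] at hB
      rcases hB with h | h | h
      · rw [h, ← hB₀eq]; exact hB₀
      · rw [h, ← hBreq]; exact hBr
      · exact hunits B h

end BigK2

section MidK
variable {r : ℕ} (hr : 6 ≤ r)
include hr

lemma singr_not_mem_units : ({r} : Finset ℕ) ∉ units r := singleton_not_unit hr

lemma sing0_not_mem : ({0} : Finset ℕ) ∉ insert ({r} : Finset ℕ) (units r) := by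
  rw [Finset.mem_insert]
  rintro (h | h)
  · have : (0:ℕ) ∈ ({r} : Finset ℕ) := h ▸ Finset.mem_singleton_self 0
    rw [Finset.mem_singleton] at this; omega
  · exact singleton_not_unit hr h

lemma P1_sum_split (B : Finset ℕ) :
    ∑ C ∈ P1 r, (B ∩ C).card
      = (B ∩ {0}).card + ((B ∩ {r}).card + ∑ C ∈ units r, (B ∩ C).card) := by
  unfold P1
  rw [Finset.sum_insert (sing0_not_mem hr), Finset.sum_insert (singr_not_mem_units hr)]

omit hr in
lemma pair_card_split (B : Finset ℕ) (h0r : (0:ℕ) ≠ r) :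
    (B ∩ ({0, r} : Finset ℕ)).card = (B ∩ {0}).card + (B ∩ {r}).card := by
  have heq : B ∩ ({0, r} : Finset ℕ) = (B ∩ {0}) ∪ (B ∩ {r}) := by
    ext v
    simp only [Finset.mem_inter, Finset.mem_insert, Finset.mem_singleton, Finset.mem_union]
    tauto
  rw [heq, Finset.card_union_of_disjoint]
  rw [Finset.disjoint_left]
  intro v hv hw
  rw [Finset.mem_inter, Finset.mem_singleton] at hv hw
  exact h0r (hv.2 ▸ hw.2 ▸ rfl)

lemma zero_mem_row0 : (0:ℕ) ∈ row r 0 := by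
  rw [mem_row hr]
  have := n_big hr
  constructor
  · omega
  · rw [lt_min_iff]; omega

lemma r_mem_row1 : r ∈ row r 1 := by
  rw [mem_row hr]
  have := n_big hr
  constructor
  · omega
  · rw [lt_min_iff]; omega

/-- transversal classes: size controlled by intersection with {0, r} and misses -/
lemma trans_card_bound {Q B : Finset ℕ → Prop} : True := trivial

lemma mid_k {Q : Finset (Finset ℕ)} (hQ : GoodPartition r Q) (hk : Q.card = r - 1) :
    Q = P3 r := by
  classical
  have hnb := n_big hr
  have hcast : ((r * r : ℕ) : ℤ) = (r:ℤ) * (r:ℤ) := by push_cast; ring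
  have hnZ : ((n r : ℕ) : ℤ) = (r:ℤ) * (r:ℤ) - r - 1 := by
    have h1 := n_eq hr
    have h2 := rsq hr
    omega
  have hsumN := part_sum_card hQ.1
  have hsumZ : ∑ B ∈ Q, ((r:ℤ) - (B.card : ℤ)) = 1 := by
    rw [Finset.sum_sub_distrib, Finset.sum_const, hk]
    have hc : ∑ B ∈ Q, ((B.card : ℤ)) = ((n r : ℕ) : ℤ) := by exact_mod_cast hsumN
    rw [hc, nsmul_eq_mul]
    have e2 : ((r - 1 : ℕ) : ℤ) = (r:ℤ) - 1 := by omega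
    rw [e2]
    have e3 : ((r:ℤ) - 1) * (r:ℤ) = (r:ℤ)*(r:ℤ) - r := by ring
    omega
  set isrow : Finset ℕ → Prop := fun B => ∃ i, i < r - 1 ∧ B = row r i with hisrowdef
  have hrowterm : ∀ B ∈ Q, isrow B → (0:ℤ) ≤ (r:ℤ) - B.card := by
    rintro B hB ⟨i, hi, hBr⟩
    have h1 : B.card ≤ r := hBr ▸ card_row_le hr
    have : (B.card : ℤ) ≤ (r:ℤ) := by exact_mod_cast h1
    omega
  have hsplit := Finset.sum_filter_add_sum_filter_not Q isrow (fun B => ((r:ℤ) - (B.card:ℤ)))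
  set F := Q.filter isrow with hFdef
  set NF := Q.filter (fun B => ¬ isrow B) with hNFdef
  have hFsum : 0 ≤ ∑ B ∈ F, ((r:ℤ) - (B.card:ℤ)) := by
    apply Finset.sum_nonneg
    intro B hB
    rw [hFdef, Finset.mem_filter] at hB
    exact hrowterm B hB.1 hB.2
  by_cases hT : ∃ B ∈ Q, r ≤ B.card ∧ ¬ isrow B
  · -- transversal case: contradiction
    exfalso
    obtain ⟨Bs, hBsQ, hBsbig, hBsnr⟩ := hT
    set T := NF.filter (fun B => r ≤ B.card) with hTdef
    set Sml := NF.filter (fun B => ¬ r ≤ B.card) with hSmldef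
    have hTmem : ∀ B, B ∈ T ↔ B ∈ Q ∧ ¬ isrow B ∧ r ≤ B.card := by
      intro B
      rw [hTdef, Finset.mem_filter, hNFdef, Finset.mem_filter]
      tauto
    have hBsT : Bs ∈ T := (hTmem Bs).mpr ⟨hBsQ, hBsnr, hBsbig⟩
    have htrans : ∀ B ∈ T, ∀ C ∈ units r, (B ∩ C).card ≤ 1 := by
      intro B hB
      rw [hTmem] at hB
      rcases (class_card_structure hr hQ hB.1).2 hB.2.2 with h | h
      · exact absurd h hB.2.1
      · exact h
    -- the sum of card B over P1 classes
    have hcardsum : ∀ B ∈ T, B.card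
        = (B ∩ ({0,r} : Finset ℕ)).card + ∑ C ∈ units r, (B ∩ C).card := by
      intro B hB
      rw [hTmem] at hB
      have h1 := part_sum_inter (P1_partition hr) (hQ.1.2.1 B hB.1)
      rw [P1_sum_split hr] at h1
      rw [pair_card_split B (by omega)]
      omega
    have hf1 : ∀ B ∈ T, B.card ≤ (B ∩ ({0,r} : Finset ℕ)).card + (r - 1) := by
      intro B hB
      have h1 := hcardsum B hB
      have h2 : ∑ C ∈ units r, (B ∩ C).card ≤ (units r).card • 1 :=
        Finset.sum_le_card_nsmul _ _ 1 (fun C hC => htrans B hB C hC)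
      rw [card_units hr, smul_eq_mul, mul_one] at h2
      omega
    have hf2 : ∑ B ∈ T, (B ∩ ({0,r} : Finset ℕ)).card ≤ 2 := by
      have hdisj : ∀ B1 ∈ T, ∀ B2 ∈ T, B1 ≠ B2 →
          Disjoint (B1 ∩ ({0,r}:Finset ℕ)) (B2 ∩ ({0,r}:Finset ℕ)) := by
        intro B1 h1 B2 h2 h12
        rw [hTmem] at h1 h2
        exact Finset.disjoint_of_subset_left Finset.inter_subset_left
          (Finset.disjoint_of_subset_right Finset.inter_subset_left
            (part_disjoint hQ.1 h1.1 h2.1 h12))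
      rw [← Finset.card_biUnion hdisj]
      have hsub : T.biUnion (fun B => B ∩ ({0,r}:Finset ℕ)) ⊆ ({0,r}:Finset ℕ) := by
        intro v hv
        rw [Finset.mem_biUnion] at hv
        obtain ⟨B, -, hvB⟩ := hv
        exact (Finset.mem_inter.mp hvB).2
      have := Finset.card_le_card hsub
      have hc2 : ({0,r} : Finset ℕ).card ≤ 2 :=
        (Finset.card_insert_le _ _).trans (by rw [Finset.card_singleton])
      omega
    have hTsum : (T.card : ℤ) - 2 ≤ ∑ B ∈ T, ((r:ℤ) - (B.card:ℤ)) := by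
      have hle : ∀ B ∈ T, (1:ℤ) - ((B ∩ ({0,r}:Finset ℕ)).card : ℤ) ≤ (r:ℤ) - B.card := by
        intro B hB
        have h1 := hf1 B hB
        have h6 := hr
        omega
      have hsum2 := Finset.sum_le_sum hle
      rw [Finset.sum_sub_distrib, Finset.sum_const, nsmul_eq_mul, mul_one] at hsum2
      have hcast3 : (∑ B ∈ T, ((B ∩ ({0,r}:Finset ℕ)).card : ℤ)) ≤ 2 := by
        exact_mod_cast hf2
      omega
    -- miss set of Bs
    set miss := (P1 r).filter (fun C => Bs ∩ C = ∅) with hmissdef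
    have hmissbound : miss.card + Bs.card ≤ r + 1 := by
      have h1 := part_sum_inter (P1_partition hr) (hQ.1.2.1 Bs hBsQ)
      have hsplit2 := Finset.sum_filter_add_sum_filter_not (P1 r)
        (fun C => Bs ∩ C = ∅) (fun C => (Bs ∩ C).card)
      have hz : ∑ C ∈ miss, (Bs ∩ C).card = 0 := by
        apply Finset.sum_eq_zero
        intro C hC
        rw [hmissdef, Finset.mem_filter] at hC
        rw [hC.2, Finset.card_empty]
      have hone : ∀ C ∈ (P1 r).filter (fun C => ¬ Bs ∩ C = ∅), (Bs ∩ C).card ≤ 1 := by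
        intro C hC
        rw [Finset.mem_filter] at hC
        have hC1 := hC.1
        rw [mem_P1 hr] at hC1
        rcases hC1 with h | h | h
        · exact h ▸ inter_singleton_card_le hr Bs 0
        · exact h ▸ inter_singleton_card_le hr Bs r
        · exact htrans Bs hBsT C h
      have h2 : ∑ C ∈ (P1 r).filter (fun C => ¬ Bs ∩ C = ∅), (Bs ∩ C).card
          ≤ ((P1 r).filter (fun C => ¬ Bs ∩ C = ∅)).card • 1 :=
        Finset.sum_le_card_nsmul _ _ 1 hone
      have h3 := Finset.card_filter_add_card_filter_not
        (s := P1 r) (p := fun C => Bs ∩ C = ∅)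
      rw [card_P1 hr] at h3
      rw [smul_eq_mul, mul_one] at h2
      rw [← hmissdef] at h3 hsplit2
      omega
    have hmissle : miss.card ≤ 1 := by omega
    -- injection from row classes into miss
    have hFinj : F.card ≤ miss.card := by
      set φ : Finset ℕ → Finset ℕ := fun B =>
        if 0 ∈ B then {0} else if r ∈ B then ({r} : Finset ℕ) else B with hφ
      apply Finset.card_le_card_of_injOn φ
      · intro B hB
        rw [Finset.mem_coe, Finset.mem_filter] at hB
        obtain ⟨hBQ, i, hi, hBrow⟩ := hB
        have hBBs : B ≠ Bs := fun h => hBsnr ⟨i, hi, h ▸ hBrow⟩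
        have hdisjB : Disjoint Bs B := part_disjoint hQ.1 hBsQ hBQ (Ne.symm hBBs)
        rw [Finset.mem_coe, hmissdef, Finset.mem_filter]
        rw [hφ]
        dsimp only
        split
        · next h0 =>
          refine ⟨by rw [mem_P1 hr]; exact Or.inl rfl, ?_⟩
          rw [Finset.eq_empty_iff_forall_notMem]
          intro v hv
          rw [Finset.mem_inter, Finset.mem_singleton] at hv
          exact Finset.disjoint_left.mp hdisjB (hv.2 ▸ hv.1) (hv.2 ▸ h0)
        split
        · next h0 hr' =>
          refine ⟨by rw [mem_P1 hr]; exact Or.inr (Or.inl rfl), ?_⟩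
          rw [Finset.eq_empty_iff_forall_notMem]
          intro v hv
          rw [Finset.mem_inter, Finset.mem_singleton] at hv
          exact Finset.disjoint_left.mp hdisjB (hv.2 ▸ hv.1) (hv.2 ▸ hr')
        · next h0 hr' =>
          have hi0 : i ≠ 0 := by
            intro h; subst h
            exact h0 (hBrow ▸ zero_mem_row0 hr)
          have hi1 : i ≠ 1 := by
            intro h; subst h
            exact hr' (hBrow ▸ r_mem_row1 hr)
          have hBunit : B ∈ units r := by
            rw [mem_units hr]
            exact Or.inr (Or.inr ⟨i, by omega, hi, hBrow⟩)
          refine ⟨by rw [mem_P1 hr]; exact Or.inr (Or.inr hBunit), ?_⟩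
          rw [← Finset.disjoint_iff_inter_eq_empty]
          exact hdisjB
      · intro B1 h1 B2 h2 heq
        rw [Finset.mem_coe, hFdef, Finset.mem_filter] at h1 h2
        obtain ⟨hB1Q, i1, hi1, hB1row⟩ := h1
        obtain ⟨hB2Q, i2, hi2, hB2row⟩ := h2
        have hcard1 : r - 1 ≤ B1.card := hB1row ▸ card_row_ge hr hi1
        have hcard2 : r - 1 ≤ B2.card := hB2row ▸ card_row_ge hr hi2
        rw [hφ] at heq
        dsimp only at heq
        by_cases a1 : 0 ∈ B1 <;> by_cases a2 : 0 ∈ B2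
        · exact part_unique hQ.1 hB1Q hB2Q a1 a2
        · rw [if_pos a1, if_neg a2] at heq
          by_cases b2 : r ∈ B2
          · rw [if_pos b2] at heq
            have : (0:ℕ) ∈ ({r}:Finset ℕ) := heq ▸ Finset.mem_singleton_self 0
            rw [Finset.mem_singleton] at this
            omega
          · rw [if_neg b2] at heq
            have : B2.card = 1 := by rw [← heq, Finset.card_singleton]
            omega
        · rw [if_pos a2, if_neg a1] at heq
          by_cases b1 : r ∈ B1
          · rw [if_pos b1] at heq
            have : (0:ℕ) ∈ ({r}:Finset ℕ) := heq ▸ Finset.mem_singleton_self 0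
            rw [Finset.mem_singleton] at this
            omega
          · rw [if_neg b1] at heq
            have : B1.card = 1 := by rw [heq, Finset.card_singleton]
            omega
        · rw [if_neg a1, if_neg a2] at heq
          by_cases b1 : r ∈ B1 <;> by_cases b2 : r ∈ B2
          · exact part_unique hQ.1 hB1Q hB2Q b1 b2
          · rw [if_pos b1, if_neg b2] at heq
            have : B2.card = 1 := by rw [← heq, Finset.card_singleton]
            omega
          · rw [if_neg b1, if_pos b2] at heq
            have : B1.card = 1 := by rw [heq, Finset.card_singleton]
            omega
          · rw [if_neg b1, if_neg b2] at heq
            exact heq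
    -- small classes
    have hSmlsum : (Sml.card : ℤ) ≤ ∑ B ∈ Sml, ((r:ℤ) - (B.card:ℤ)) := by
      have : ∀ B ∈ Sml, (1:ℤ) ≤ (r:ℤ) - (B.card:ℤ) := by
        intro B hB
        rw [hSmldef, Finset.mem_filter] at hB
        have : B.card < r := by omega
        have : (B.card : ℤ) < (r:ℤ) := by exact_mod_cast this
        omega
      have h2 := Finset.card_nsmul_le_sum Sml _ 1 this
      rw [nsmul_eq_mul, mul_one] at h2
      exact h2
    have hNFsplit := Finset.sum_filter_add_sum_filter_not NF
      (fun B => r ≤ B.card) (fun B => ((r:ℤ) - (B.card:ℤ)))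
    have hcards1 := Finset.card_filter_add_card_filter_not
      (s := Q) (p := isrow)
    have hcards2 := Finset.card_filter_add_card_filter_not
      (s := NF) (p := fun B => r ≤ B.card)
    rw [hk] at hcards1
    rw [← hFdef, ← hNFdef] at hcards1
    rw [← hTdef, ← hSmldef] at hcards2 hNFsplit
    -- assemble everything
    have hTBs : r ≤ Bs.card := hBsbig
    have hFm : F.card ≤ 1 := le_trans hFinj hmissle
    have htot : (1:ℤ) ≥ (T.card:ℤ) - 2 + (Sml.card:ℤ) := by
      rw [← hsumZ, ← hsplit, ← hNFsplit]
      have := hFsum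
      have := hTsum
      have := hSmlsum
      omega
    have hc1 : F.card + NF.card = r - 1 := hcards1
    have hc2 : T.card + Sml.card = NF.card := hcards2
    have hTc : 1 ≤ T.card := Finset.card_pos.mpr ⟨Bs, hBsT⟩
    have hcast4 : (T.card:ℤ) + (Sml.card:ℤ) = (NF.card:ℤ) := by exact_mod_cast hc2
    have hcast5 : (F.card:ℤ) + (NF.card:ℤ) = ((r:ℤ) - 1) := by
      have : ((r-1:ℕ):ℤ) = (r:ℤ) - 1 := by omega
      rw [← this]
      exact_mod_cast hc1
    have hcast6 : (F.card : ℤ) ≤ 1 := by exact_mod_cast hFm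
    have hcast7 : (6:ℤ) ≤ (r:ℤ) := by exact_mod_cast hr
    omega
  · -- no transversal classes: conclude Q = P3
    push_neg at hT
    have hNFsmall : ∀ B ∈ NF, B.card ≤ r - 1 := by
      intro B hB
      rw [hNFdef, Finset.mem_filter] at hB
      by_contra h
      exact hB.2 (hT B hB.1 (by omega))
    have hNFsum : (NF.card : ℤ) ≤ ∑ B ∈ NF, ((r:ℤ) - (B.card:ℤ)) := by
      have hle : ∀ B ∈ NF, (1:ℤ) ≤ (r:ℤ) - (B.card:ℤ) := by
        intro B hB
        have h1 := hNFsmall B hB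
        have : (B.card:ℤ) ≤ (r:ℤ) - 1 := by
          have h2 : B.card ≤ r - 1 := h1
          have : ((r-1:ℕ):ℤ) = (r:ℤ)-1 := by omega
          rw [← this]
          exact_mod_cast h2
        omega
      have h2 := Finset.card_nsmul_le_sum NF _ 1 hle
      rw [nsmul_eq_mul, mul_one] at h2
      exact h2
    have hNFle : NF.card ≤ 1 := by
      have : (NF.card : ℤ) ≤ 1 := by
        rw [← hsumZ, ← hsplit] at *
        omega
      exact_mod_cast this
    -- every row is a class
    have hallrows : ∀ i, i < r - 1 → row r i ∈ Q := by
      intro i hi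
      by_contra hrownot
      obtain ⟨v, hv⟩ := row_nonempty hr hi
      have hclass : ∀ w ∈ row r i, ∃ B ∈ NF, w ∈ B := by
        intro w hw
        obtain ⟨B, ⟨hB, hwB⟩, -⟩ := hQ.1.2.2 w (row_subset_X hr hw)
        refine ⟨B, ?_, hwB⟩
        rw [hNFdef, Finset.mem_filter]
        refine ⟨hB, ?_⟩
        rintro ⟨j, hj, hBrow⟩
        have : w ∈ row r j := hBrow ▸ hwB
        have e1 := rowIdx_eq hr this
        have e2 := rowIdx_eq hr hw
        have : j = i := by omega
        exact hrownot (this ▸ hBrow ▸ hB)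
      obtain ⟨B₀, hB₀NF, hvB₀⟩ := hclass v hv
      have hsub : row r i ⊆ B₀ := by
        intro w hw
        obtain ⟨B, hBNF, hwB⟩ := hclass w hw
        have : B = B₀ := Finset.card_le_one.mp hNFle B hBNF B₀ hB₀NF
        exact this ▸ hwB
      have hcardB₀ : B₀.card ≤ r - 1 := hNFsmall B₀ hB₀NF
      have hrow_ge := card_row_ge hr hi
      have heq : row r i = B₀ :=
        Finset.eq_of_subset_of_card_le hsub (by omega)
      rw [hNFdef, Finset.mem_filter] at hB₀NF
      exact hB₀NF.2 ⟨i, hi, heq.symm⟩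
    have hsubP3 : P3 r ⊆ Q := by
      intro C hC
      rw [mem_P3 hr] at hC
      obtain ⟨i, hi, h⟩ := hC
      exact h ▸ hallrows i hi
    apply (Finset.eq_of_subset_of_card_le hsubP3 ?_).symm
    rw [hk, card_P3 hr]

end MidK

section Assemble
variable {r : ℕ} (hr : 6 ≤ r)
include hr

lemma small_k {Q : Finset (Finset ℕ)} (hQ : GoodPartition r Q) : r - 1 ≤ Q.card := by
  by_contra hcon
  have hc : Q.card ≤ r - 2 := by omega
  have hsum := part_sum_card hQ.1
  have hb : ∑ B ∈ Q, B.card ≤ Q.card • (r + 1) :=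
    Finset.sum_le_card_nsmul Q _ (r+1) (fun B hB => (class_card_structure hr hQ hB).1)
  rw [smul_eq_mul] at hb
  have h2 : Q.card * (r + 1) ≤ (r - 2) * (r + 1) := Nat.mul_le_mul_right _ hc
  have h3 : (r - 2) * (r + 1) = r * (r + 1) - 2 * (r + 1) := Nat.sub_mul r 2 (r+1)
  have h4 : r * (r + 1) = r * r + r := by ring
  have h5 := n_eq hr
  have h6 := rsq hr
  omega

/-- the bi-hypergraph -/
noncomputable def H (r : ℕ) : BiHypergraph ℕ :=
  ⟨X r, edges r, fun e he => (mem_edges.mp he).1⟩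

omit hr in
lemma strict_iff {P : Finset (Finset ℕ)} :
    (H r).IsStrictColoring P ↔ GoodPartition r P := by
  unfold BiHypergraph.IsStrictColoring GoodPartition IsPartition H
  constructor
  · rintro ⟨h1, h2, h3, h4⟩
    exact ⟨⟨h1, h2, h3⟩, fun e he => h4 e (mem_edges.mpr he)⟩
  · rintro ⟨⟨h1, h2, h3⟩, h4⟩
    exact ⟨h1, h2, h3, fun e he => h4 e (mem_edges.mp he)⟩

lemma classify {P : Finset (Finset ℕ)} (hs : GoodPartition r P) :
    (P = P3 r ∧ P.card = r - 1) ∨ (P = P2 r ∧ P.card = r) ∨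
      (P = P1 r ∧ P.card = r + 1) := by
  have h1 := small_k hr hs
  by_cases h : P.card = r - 1
  · exact Or.inl ⟨mid_k hr hs h, h⟩
  · have h2 : r ≤ P.card := by omega
    rcases big_k hr hs h2 with h3 | h3
    · exact Or.inr (Or.inr ⟨h3, by rw [h3, card_P1 hr]⟩)
    · exact Or.inr (Or.inl ⟨h3, by rw [h3, card_P2 hr]⟩)

lemma main : (H r).IsUniform r ∧ (H r).verts.card = r * (r - 1) - 1 ∧
    (H r).IsOneRealization {r + 1, r, r - 1} := by
  refine ⟨?_, ?_, ?_, ?_⟩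
  · intro e he
    exact (mem_edges.mp he).2.1
  · exact Finset.card_range _
  · -- feasible set
    ext k
    simp only [BiHypergraph.feasibleSet, Set.mem_setOf_eq, Finset.coe_insert,
      Set.mem_insert_iff, Finset.coe_singleton, Set.mem_singleton_iff]
    constructor
    · rintro ⟨P, hs, hcard⟩
      rcases classify hr (strict_iff.mp hs) with ⟨-, h⟩ | ⟨-, h⟩ | ⟨-, h⟩
      · right; right; omega
      · right; left; omega
      · left; omega
    · rintro (h | h | h)
      · exact ⟨P1 r, strict_iff.mpr (P1_good hr), by rw [card_P1 hr, h]⟩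
      · exact ⟨P2 r, strict_iff.mpr (P2_good hr), by rw [card_P2 hr, h]⟩
      · exact ⟨P3 r, strict_iff.mpr (P3_good hr), by rw [card_P3 hr, h]⟩
  · -- uniqueness
    intro P Q hP hQ hcard
    rcases classify hr (strict_iff.mp hP) with ⟨e1, c1⟩ | ⟨e1, c1⟩ | ⟨e1, c1⟩ <;>
      rcases classify hr (strict_iff.mp hQ) with ⟨e2, c2⟩ | ⟨e2, c2⟩ | ⟨e2, c2⟩ <;>
        first
          | (exfalso; rw [c1, c2] at hcard; omega)
          | (rw [e1, e2])

end Assemble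
end Stmt16Aux

theorem stmt16 (r : ℕ) (hr : 6 ≤ r) :
    ∃ H : BiHypergraph ℕ, H.IsUniform r ∧
      H.verts.card = r * (r - 1) - 1 ∧
      H.IsOneRealization {r + 1, r, r - 1} :=
  ⟨Stmt16Aux.H r, Stmt16Aux.main hr⟩
end

section
/- For every integer r ≥ 4, there exists an r-uniform bi-hypergraph with exactly r(r − 1) − 1 vertices which is a one-realization of {r, r − 1}. -/
set_option linter.unusedSectionVars false

namespace Stmt19

def pcls (r v : ℕ) : ℕ := if v = 0 then 0 else if v < r - 1 then 1 else (v + 1) / r + 1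

def qcls (r v : ℕ) : ℕ := max (pcls r v) 1

def nn (r : ℕ) : ℕ := r * r - r - 1

def X (r : ℕ) : Finset ℕ := Finset.range (nn r)

def A (r j : ℕ) : Finset ℕ := (X r).filter (fun v => pcls r v = j)

def B (r j : ℕ) : Finset ℕ := (X r).filter (fun v => qcls r v = j)

variable {r : ℕ} (hr : 4 ≤ r)

lemma mem_X {v : ℕ} : v ∈ X r ↔ v < r * r - r - 1 := by simp [X, nn]

lemma pcls_zero {v : ℕ} : pcls r v = 0 ↔ v = 0 := by
  unfold pcls
  split
  · simp; omega
  · split <;> simp <;> omega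

include hr

lemma pcls_one {v : ℕ} : pcls r v = 1 ↔ (v ≠ 0 ∧ v < r - 1) := by
  unfold pcls
  split
  · simp; omega
  · split
    · simp; omega
    · have h1 : 1 ≤ (v+1)/r := (Nat.one_le_div_iff (by omega)).2 (by omega)
      simp; omega

lemma pcls_lt {v : ℕ} (hv : v ∈ X r) : pcls r v < r := by
  rw [mem_X] at hv
  have h4 : 4 * r ≤ r * r := Nat.mul_le_mul_right r hr
  unfold pcls
  split
  · omega
  · split
    · omega
    · have h1 : (v + 1) / r ≤ (r * r - r - 1) / r := Nat.div_le_div_right (by omega)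
      have h2 : (r * r - r - 1) / r = r - 2 := by
        apply Nat.div_eq_of_lt_le
        · have : (r - 2) * r = r * r - 2 * r := by
            rw [Nat.sub_mul]
          omega
        · have : (r - 2 + 1) * r = r * r - 2 * r + r := by
            rw [Nat.add_mul, Nat.sub_mul]
            omega
          omega
      omega

lemma pcls_le_one {v : ℕ} : pcls r v ≤ 1 ↔ v < r - 1 := by
  have h0 := pcls_zero (r := r) (v := v)
  have h1 := pcls_one (r := r) (v := v) hr
  rcases eq_or_ne v 0 with rfl | hv
  · omega
  · rcases Nat.lt_or_ge v (r - 1) with h | h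
    · omega
    · have : pcls r v ≠ 0 := by omega
      have : pcls r v ≠ 1 := by omega
      omega

lemma qcls_one {v : ℕ} : qcls r v = 1 ↔ v < r - 1 := by
  have := pcls_le_one (r := r) (v := v) hr
  unfold qcls
  omega

lemma qcls_ge_two {v j : ℕ} (hj : 2 ≤ j) : qcls r v = j ↔ pcls r v = j := by
  unfold qcls; omega

lemma pcls_eq_of_ge {v j : ℕ} (hj : 2 ≤ j) :
    pcls r v = j ↔ ((j - 1) * r - 1 ≤ v ∧ v < j * r - 1) := by
  have hr0 : 0 < r := by omega
  have hmul : (j - 1) * r + r = j * r := by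
    have : (j - 1 + 1) * r = (j-1)*r + r := by ring
    rw [← this, Nat.sub_add_cancel (by omega)]
  have hge : r ≤ (j - 1) * r := Nat.le_mul_of_pos_left r (by omega)
  have hd : (v + 1) / r = j - 1 ↔ ((j-1)*r ≤ v+1 ∧ v+1 < j*r) := by
    constructor
    · intro h
      constructor
      · calc (j-1)*r = (v+1)/r * r := by rw [h]
          _ ≤ v + 1 := Nat.div_mul_le_self _ _
      · have : (v+1)/r < j := by omega
        have := (Nat.div_lt_iff_lt_mul hr0).1 this
        omega
    · intro ⟨ha, hb⟩
      have h1 : j - 1 ≤ (v+1)/r := (Nat.le_div_iff_mul_le hr0).2 ha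
      have h2 : (v+1)/r < j := (Nat.div_lt_iff_lt_mul hr0).2 (by omega)
      omega
  unfold pcls
  split
  · omega
  · split
    · omega
    · omega



omit hr in
lemma mem_A {v j : ℕ} : v ∈ A r j ↔ v ∈ X r ∧ pcls r v = j := by
  simp [A]

omit hr in
lemma mem_B {v j : ℕ} : v ∈ B r j ↔ v ∈ X r ∧ qcls r v = j := by
  simp [B]

include hr

lemma zero_mem_X : 0 ∈ X r := by
  have h4 : 4 * r ≤ r * r := Nat.mul_le_mul_right r hr
  rw [mem_X]; omega

lemma X_card : (X r).card = r * (r - 1) - 1 := by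
  have : r * (r - 1) = r * r - r := by rw [Nat.mul_sub]; omega
  simp [X, nn, this]

lemma A_eq {j : ℕ} (h2 : 2 ≤ j) (hjr : j < r) :
    A r j = Finset.Ico ((j - 1) * r - 1) (j * r - 1) := by
  have h4 : 4 * r ≤ r * r := Nat.mul_le_mul_right r hr
  have hmul : (j - 1) * r + r = j * r := by
    have : (j - 1 + 1) * r = (j-1)*r + r := by ring
    rw [← this, Nat.sub_add_cancel (by omega)]
  have hub : j * r ≤ (r - 1) * r := Nat.mul_le_mul_right r (by omega)
  have hrr : (r - 1) * r = r * r - r := by rw [Nat.sub_mul]; omega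
  have hge : r ≤ (j - 1) * r := Nat.le_mul_of_pos_left r (by omega)
  ext v
  rw [mem_A, mem_X, pcls_eq_of_ge hr h2, Finset.mem_Ico]
  omega

lemma card_A {j : ℕ} (h2 : 2 ≤ j) (hjr : j < r) : (A r j).card = r := by
  rw [A_eq hr h2 hjr, Nat.card_Ico]
  have hmul : (j - 1) * r + r = j * r := by
    have : (j - 1 + 1) * r = (j-1)*r + r := by ring
    rw [← this, Nat.sub_add_cancel (by omega)]
  have hge : r ≤ (j - 1) * r := Nat.le_mul_of_pos_left r (by omega)
  omega

lemma B_one : B r 1 = Finset.range (r - 1) := by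
  have h4 : 4 * r ≤ r * r := Nat.mul_le_mul_right r hr
  ext v
  rw [mem_B, mem_X, qcls_one hr, Finset.mem_range]
  omega

lemma card_B_one : (B r 1).card = r - 1 := by
  rw [B_one hr, Finset.card_range]

lemma B_eq_A {j : ℕ} (h2 : 2 ≤ j) : B r j = A r j := by
  ext v
  rw [mem_A, mem_B, qcls_ge_two hr h2]

lemma A_zero : A r 0 = {0} := by
  ext v
  rw [mem_A, Finset.mem_singleton, pcls_zero]
  constructor
  · tauto
  · rintro rfl; exact ⟨zero_mem_X hr, rfl⟩

lemma A_nonempty {j : ℕ} (hj : j < r) : (A r j).Nonempty := by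
  have h4 : 4 * r ≤ r * r := Nat.mul_le_mul_right r hr
  rcases Nat.lt_or_ge j 2 with h | h
  · interval_cases j
    · rw [A_zero hr]; exact ⟨0, Finset.mem_singleton_self 0⟩
    · exact ⟨1, by rw [mem_A, mem_X, pcls_one hr]; omega⟩
  · have := card_A hr h hj
    apply Finset.card_pos.1; omega

lemma qcls_mem_Ico {v : ℕ} (hv : v ∈ X r) : qcls r v ∈ Finset.Ico 1 r := by
  have h1 := pcls_lt hr hv
  rw [Finset.mem_Ico]
  unfold qcls
  omega

lemma B_nonempty {j : ℕ} (h1 : 1 ≤ j) (hj : j < r) : (B r j).Nonempty := by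
  rcases Nat.lt_or_ge j 2 with h | h
  · interval_cases j
    rw [B_one hr]
    exact ⟨0, by simp; omega⟩
  · rw [B_eq_A hr h]; exact A_nonempty hr hj

lemma mem_A_pcls {v : ℕ} (hv : v ∈ X r) : v ∈ A r (pcls r v) := mem_A.2 ⟨hv, rfl⟩

lemma A_sub_X {j : ℕ} : A r j ⊆ X r := Finset.filter_subset _ _

lemma B_sub_X {j : ℕ} : B r j ⊆ X r := Finset.filter_subset _ _

lemma A_inj {i j : ℕ} (hi : i < r) (hj : j < r) (h : A r i = A r j) : i = j := by
  obtain ⟨v, hv⟩ := A_nonempty hr hi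
  have hv' := h ▸ hv
  rw [mem_A] at hv hv'
  omega


omit hr in
lemma B_inj (hr : 4 ≤ r) {i j : ℕ} (hi1 : 1 ≤ i) (hi : i < r) (hj1 : 1 ≤ j) (hj : j < r)
    (h : B r i = B r j) : i = j := by
  obtain ⟨v, hv⟩ := B_nonempty hr hi1 hi
  have hv' := h ▸ hv
  rw [mem_B] at hv hv'
  omega

def edges (r : ℕ) : Finset (Finset ℕ) :=
  ((X r).powersetCard r).filter (fun e =>
    (∃ x ∈ e, ∃ y ∈ e, qcls r x ≠ qcls r y) ∧
    (∃ x ∈ e, ∃ y ∈ e, pcls r x = pcls r y ∧ x ≠ y))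

omit hr in
lemma mem_edges {e : Finset ℕ} : e ∈ edges r ↔
    (e ⊆ X r ∧ e.card = r) ∧
    ((∃ x ∈ e, ∃ y ∈ e, qcls r x ≠ qcls r y) ∧
     (∃ x ∈ e, ∃ y ∈ e, pcls r x = pcls r y ∧ x ≠ y)) := by
  simp only [edges, Finset.mem_filter, Finset.mem_powersetCard]

omit hr in
lemma not_mem_edges {e : Finset ℕ} (hsub : e ⊆ X r) (hcard : e.card = r) (he : e ∉ edges r) :
    (∀ x ∈ e, ∀ y ∈ e, qcls r x = qcls r y) ∨
    (∀ x ∈ e, ∀ y ∈ e, pcls r x = pcls r y → x = y) := by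
  by_contra hcon
  push_neg at hcon
  obtain ⟨h1, h2⟩ := hcon
  obtain ⟨x, hx, y, hy, hxy⟩ := h1
  obtain ⟨a, ha, b, hb, hab, hab'⟩ := h2
  exact he (mem_edges.2 ⟨⟨hsub, hcard⟩, ⟨x, hx, y, hy, hxy⟩, ⟨a, ha, b, hb, hab, hab'⟩⟩)

def H (r : ℕ) : BiHypergraph ℕ where
  verts := X r
  edges := edges r
  edges_sub := fun _ he => (mem_edges.1 he).1.1

def Pcol (r : ℕ) : Finset (Finset ℕ) := (Finset.range r).image (A r)

def Qcol (r : ℕ) : Finset (Finset ℕ) := (Finset.Ico 1 r).image (B r)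

lemma Pcol_card : (Pcol r).card = r := by
  rw [Pcol, Finset.card_image_of_injOn, Finset.card_range]
  intro i hi j hj h
  exact A_inj hr (Finset.mem_range.1 hi) (Finset.mem_range.1 hj) h

lemma Qcol_card : (Qcol r).card = r - 1 := by
  rw [Qcol, Finset.card_image_of_injOn, Nat.card_Ico]
  intro i hi j hj h
  simp only [Finset.coe_Ico, Set.mem_Ico] at hi hj
  exact B_inj hr hi.1 hi.2 hj.1 hj.2 h

lemma qcls_ne_of_pcls_ne' {x y : ℕ} (h : qcls r x ≠ qcls r y) : pcls r x ≠ pcls r y := by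
  unfold qcls at h; omega

lemma Pcol_strict : (H r).IsStrictColoring (Pcol r) := by
  refine ⟨?_, ?_, ?_, ?_⟩
  · rintro C hC
    obtain ⟨j, hj, rfl⟩ := Finset.mem_image.1 hC
    exact A_nonempty hr (Finset.mem_range.1 hj)
  · rintro C hC
    obtain ⟨j, _, rfl⟩ := Finset.mem_image.1 hC
    exact A_sub_X hr
  · intro x hx
    refine ⟨A r (pcls r x), ⟨Finset.mem_image.2 ⟨pcls r x, Finset.mem_range.2 (pcls_lt hr hx), rfl⟩, mem_A_pcls hr hx⟩, ?_⟩
    rintro C ⟨hC, hxC⟩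
    obtain ⟨j, _, rfl⟩ := Finset.mem_image.1 hC
    rw [mem_A] at hxC
    rw [hxC.2]
  · intro e he
    obtain ⟨⟨hsub, hcard⟩, ⟨x, hx, y, hy, hxy⟩, ⟨a, ha, b, hb, hab, hab'⟩⟩ := mem_edges.1 he
    constructor
    · refine ⟨A r (pcls r a), Finset.mem_image.2 ⟨pcls r a, Finset.mem_range.2 (pcls_lt hr (hsub ha)), rfl⟩, ?_⟩
      have h1 : a ∈ e ∩ A r (pcls r a) := Finset.mem_inter.2 ⟨ha, mem_A_pcls hr (hsub ha)⟩
      have h2 : b ∈ e ∩ A r (pcls r a) := Finset.mem_inter.2 ⟨hb, by rw [mem_A]; exact ⟨hsub hb, hab.symm⟩⟩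
      calc 2 = ({a, b} : Finset ℕ).card := (Finset.card_pair hab').symm
        _ ≤ _ := Finset.card_le_card (by intro z hz; simp at hz; rcases hz with rfl | rfl <;> assumption)
    · have hpne : pcls r x ≠ pcls r y := qcls_ne_of_pcls_ne' hr hxy
      refine ⟨x, hx, y, hy, A r (pcls r x),
        Finset.mem_image.2 ⟨_, Finset.mem_range.2 (pcls_lt hr (hsub hx)), rfl⟩,
        A r (pcls r y),
        Finset.mem_image.2 ⟨_, Finset.mem_range.2 (pcls_lt hr (hsub hy)), rfl⟩, ?_,
        mem_A_pcls hr (hsub hx), mem_A_pcls hr (hsub hy)⟩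
      intro h
      exact hpne (A_inj hr (pcls_lt hr (hsub hx)) (pcls_lt hr (hsub hy)) h)

lemma mem_B_qcls {v : ℕ} (hv : v ∈ X r) : v ∈ B r (qcls r v) := mem_B.2 ⟨hv, rfl⟩

lemma Qcol_strict : (H r).IsStrictColoring (Qcol r) := by
  refine ⟨?_, ?_, ?_, ?_⟩
  · rintro C hC
    obtain ⟨j, hj, rfl⟩ := Finset.mem_image.1 hC
    rw [Finset.mem_Ico] at hj
    exact B_nonempty hr hj.1 hj.2
  · rintro C hC
    obtain ⟨j, _, rfl⟩ := Finset.mem_image.1 hC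
    exact B_sub_X hr
  · intro x hx
    refine ⟨B r (qcls r x), ⟨Finset.mem_image.2 ⟨qcls r x, qcls_mem_Ico hr hx, rfl⟩, mem_B_qcls hr hx⟩, ?_⟩
    rintro C ⟨hC, hxC⟩
    obtain ⟨j, _, rfl⟩ := Finset.mem_image.1 hC
    rw [mem_B] at hxC
    rw [hxC.2]
  · intro e he
    obtain ⟨⟨hsub, hcard⟩, ⟨x, hx, y, hy, hxy⟩, _⟩ := mem_edges.1 he
    constructor
    · have hlt : (Finset.Ico 1 r).card < e.card := by rw [hcard, Nat.card_Ico]; omega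
      obtain ⟨a, ha, b, hb, hab, h⟩ := Finset.exists_ne_map_eq_of_card_lt_of_maps_to hlt
        (fun z hz => qcls_mem_Ico hr (hsub hz))
      refine ⟨B r (qcls r a), Finset.mem_image.2 ⟨qcls r a, qcls_mem_Ico hr (hsub ha), rfl⟩, ?_⟩
      have h1 : a ∈ e ∩ B r (qcls r a) := Finset.mem_inter.2 ⟨ha, mem_B_qcls hr (hsub ha)⟩
      have h2 : b ∈ e ∩ B r (qcls r a) := Finset.mem_inter.2 ⟨hb, by rw [mem_B]; exact ⟨hsub hb, h.symm⟩⟩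
      calc 2 = ({a, b} : Finset ℕ).card := (Finset.card_pair hab).symm
        _ ≤ _ := Finset.card_le_card (by intro z hz; simp at hz; rcases hz with rfl | rfl <;> assumption)
    · refine ⟨x, hx, y, hy, B r (qcls r x),
        Finset.mem_image.2 ⟨_, qcls_mem_Ico hr (hsub hx), rfl⟩,
        B r (qcls r y),
        Finset.mem_image.2 ⟨_, qcls_mem_Ico hr (hsub hy), rfl⟩, ?_,
        mem_B_qcls hr (hsub hx), mem_B_qcls hr (hsub hy)⟩
      intro h
      have h1 := qcls_mem_Ico hr (hsub hx)
      have h2 := qcls_mem_Ico hr (hsub hy)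
      rw [Finset.mem_Ico] at h1 h2
      exact hxy (B_inj hr h1.1 h1.2 h2.1 h2.2 h)


def qconst (r : ℕ) (e : Finset ℕ) : Prop := ∀ x ∈ e, ∀ y ∈ e, qcls r x = qcls r y

def pinj (r : ℕ) (e : Finset ℕ) : Prop := ∀ x ∈ e, ∀ y ∈ e, pcls r x = pcls r y → x = y

include hr

lemma qconst_eq_A {e : Finset ℕ} (hsub : e ⊆ X r) (hcard : e.card = r) (hq : qconst r e) :
    ∃ j, 2 ≤ j ∧ j < r ∧ e = A r j := by
  obtain ⟨v, hv⟩ : e.Nonempty := Finset.card_pos.1 (by omega)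
  have hmem := qcls_mem_Ico hr (hsub hv)
  rw [Finset.mem_Ico] at hmem
  have hsubB : e ⊆ B r (qcls r v) := fun x hx => mem_B.2 ⟨hsub hx, hq x hx v hv⟩
  rcases Nat.lt_or_ge (qcls r v) 2 with h2 | h2
  · exfalso
    have hj1 : qcls r v = 1 := by omega
    have hle := Finset.card_le_card hsubB
    rw [hj1, card_B_one hr] at hle
    omega
  · rw [B_eq_A hr h2] at hsubB
    exact ⟨qcls r v, h2, hmem.2,
      Finset.eq_of_subset_of_card_le hsubB (by rw [card_A hr h2 hmem.2, hcard])⟩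

lemma pinj_surj {e : Finset ℕ} (hsub : e ⊆ X r) (hcard : e.card = r) (hp : pinj r e) :
    ∀ j < r, ∃ x ∈ e, pcls r x = j := by
  have himg : e.image (pcls r) = Finset.range r := by
    apply Finset.eq_of_subset_of_card_le
    · intro j hj
      obtain ⟨x, hx, rfl⟩ := Finset.mem_image.1 hj
      exact Finset.mem_range.2 (pcls_lt hr (hsub hx))
    · rw [Finset.card_range, Finset.card_image_of_injOn (fun x hx y hy h => hp x hx y hy h)]
      omega
  intro j hj
  have : j ∈ e.image (pcls r) := himg ▸ Finset.mem_range.2 hj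
  obtain ⟨x, hx, hxj⟩ := Finset.mem_image.1 this
  exact ⟨x, hx, hxj⟩

lemma pinj_zero_mem {e : Finset ℕ} (hsub : e ⊆ X r) (hcard : e.card = r) (hp : pinj r e) :
    0 ∈ e := by
  obtain ⟨x, hx, hx0⟩ := pinj_surj hr hsub hcard hp 0 (by omega)
  rw [pcls_zero] at hx0
  exact hx0 ▸ hx

omit hr

noncomputable def rep0 (C : Finset ℕ) : ℕ := if h : C.Nonempty then h.choose else 0

lemma rep0_mem {C : Finset ℕ} (h : C.Nonempty) : rep0 C ∈ C := by
  rw [rep0, dif_pos h]; exact h.choose_spec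

section Unique

variable {R : Finset (Finset ℕ)} (hR : (H r).IsStrictColoring R)
include hR

lemma class_eq {C D : Finset ℕ} (hC : C ∈ R) (hD : D ∈ R) {x : ℕ} (hxC : x ∈ C) (hxD : x ∈ D) :
    C = D := by
  have hx : x ∈ X r := hR.2.1 C hC hxC
  obtain ⟨E, _, hE⟩ := hR.2.2.1 x hx
  rw [hE C ⟨hC, hxC⟩, hE D ⟨hD, hxD⟩]

lemma mono_nonedge {C e : Finset ℕ} (hC : C ∈ R) (hec : e ⊆ C) (hcard : e.card = r) :
    qconst r e ∨ pinj r e := by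
  have hsub : e ⊆ X r := hec.trans (hR.2.1 C hC)
  apply not_mem_edges hsub hcard
  intro he
  obtain ⟨_, x, hx, y, hy, C', hC', D', hD', hne, hxC', hyD'⟩ := hR.2.2.2 e he
  exact hne ((class_eq hR hC' hC hxC' (hec hx)).trans (class_eq hR hC hD' (hec hy) hyD'))

lemma rainbow_nonedge {e : Finset ℕ} (hsub : e ⊆ X r) (hcard : e.card = r)
    (hrb : ∀ x ∈ e, ∀ y ∈ e, ∀ C ∈ R, x ∈ C → y ∈ C → x = y) :
    qconst r e ∨ pinj r e := by
  apply not_mem_edges hsub hcard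
  intro he
  obtain ⟨⟨C, hC, hC2⟩, _⟩ := hR.2.2.2 e he
  obtain ⟨x, hx, y, hy, hxy⟩ := Finset.one_lt_card.1 hC2
  rw [Finset.mem_inter] at hx hy
  exact hxy (hrb x hx.1 y hy.1 C hC hx.2 hy.2)

include hr

lemma class_card_le {C : Finset ℕ} (hC : C ∈ R) : C.card ≤ r := by
  by_contra hcon
  push_neg at hcon
  have h1 : r ≤ (C.erase 0).card := by
    have := Finset.pred_card_le_card_erase (s := C) (a := 0)
    omega
  obtain ⟨e, hesub, hecard⟩ := Finset.exists_subset_card_eq h1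
  have heC : e ⊆ C := hesub.trans (Finset.erase_subset _ _)
  rcases mono_nonedge hR hC heC hecard with hq | hp
  · obtain ⟨j, hj2, hjr, rfl⟩ := qconst_eq_A hr (heC.trans (hR.2.1 C hC)) hecard hq
    have hzne : (C \ A r j).Nonempty := by
      rw [← Finset.card_pos, Finset.card_sdiff_of_subset heC, card_A hr hj2 hjr]; omega
    obtain ⟨z, hz⟩ := hzne
    rw [Finset.mem_sdiff] at hz
    obtain ⟨w, hw⟩ := A_nonempty hr hjr
    have hz' : z ∉ (A r j).erase w := fun h => hz.2 (Finset.mem_of_mem_erase h)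
    have hcarde : ((A r j).erase w).card = r - 1 := by
      rw [Finset.card_erase_of_mem hw, card_A hr hj2 hjr]
    have hcard' : (insert z ((A r j).erase w)).card = r := by
      rw [Finset.card_insert_of_notMem hz', hcarde]; omega
    have hsubC : insert z ((A r j).erase w) ⊆ C := by
      intro a ha
      rcases Finset.mem_insert.1 ha with rfl | ha
      · exact hz.1
      · exact heC (Finset.mem_of_mem_erase ha)
    rcases mono_nonedge hR hC hsubC hcard' with hq' | hp'
    · obtain ⟨a, ha⟩ : ((A r j).erase w).Nonempty := Finset.card_pos.1 (by omega)
      have haj : pcls r a = j := (mem_A.1 (Finset.mem_of_mem_erase ha)).2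
      have hzj : qcls r z = qcls r a :=
        hq' z (Finset.mem_insert_self _ _) a (Finset.mem_insert_of_mem ha)
      have : qcls r a = j := (qcls_ge_two hr hj2).2 haj
      have hpz : pcls r z = j := (qcls_ge_two hr hj2).1 (by omega)
      exact hz.2 (mem_A.2 ⟨hR.2.1 C hC hz.1, hpz⟩)
    · obtain ⟨a, ha, b, hb, hab⟩ := Finset.one_lt_card.1 (show 1 < ((A r j).erase w).card by omega)
      have haj : pcls r a = j := (mem_A.1 (Finset.mem_of_mem_erase ha)).2
      have hbj : pcls r b = j := (mem_A.1 (Finset.mem_of_mem_erase hb)).2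
      exact hab (hp' a (Finset.mem_insert_of_mem ha) b (Finset.mem_insert_of_mem hb) (by omega))
  · have h0 : 0 ∈ e := pinj_zero_mem hr (heC.trans (hR.2.1 C hC)) hecard hp
    exact (Finset.mem_erase.1 (hesub h0)).1 rfl

lemma sel_nonedge {S : Finset (Finset ℕ)} (hS : S ⊆ R) (hScard : S.card = r)
    {rep : Finset ℕ → ℕ} (hrep : ∀ C ∈ S, rep C ∈ C) :
    (S.image rep ⊆ X r) ∧ (S.image rep).card = r ∧
      (qconst r (S.image rep) ∨ pinj r (S.image rep)) := by
  have hsub : S.image rep ⊆ X r := by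
    intro x hx
    obtain ⟨C, hC, rfl⟩ := Finset.mem_image.1 hx
    exact hR.2.1 C (hS hC) (hrep C hC)
  have hinj : ∀ C ∈ S, ∀ D ∈ S, rep C = rep D → C = D := by
    intro C hC D hD h
    exact class_eq hR (hS hC) (hS hD) (hrep C hC) (h ▸ hrep D hD)
  have hcard : (S.image rep).card = r := by
    rw [Finset.card_image_of_injOn (fun C hC D hD h => hinj C hC D hD h), hScard]
  refine ⟨hsub, hcard, rainbow_nonedge hR hsub hcard ?_⟩
  intro x hx y hy C hC hxC hyC
  obtain ⟨Cx, hCx, rfl⟩ := Finset.mem_image.1 hx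
  obtain ⟨Cy, hCy, rfl⟩ := Finset.mem_image.1 hy
  have h1 : Cx = C := class_eq hR (hS hCx) hC (hrep _ hCx) hxC
  have h2 : Cy = C := class_eq hR (hS hCy) hC (hrep _ hCy) hyC
  rw [hinj Cx hCx Cy hCy ?_]
  rw [h1, h2]

lemma sel_pinj {S : Finset (Finset ℕ)} (hS : S ⊆ R) (hScard : S.card = r)
    {rep : Finset ℕ → ℕ} (hrep : ∀ C ∈ S, rep C ∈ C) (hz : ∃ C ∈ S, rep C = 0) :
    pinj r (S.image rep) := by
  obtain ⟨hsub, hcard, h | h⟩ := sel_nonedge hr hR hS hScard hrep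
  · exfalso
    obtain ⟨j, hj2, hjr, hA⟩ := qconst_eq_A hr hsub hcard h
    obtain ⟨C, hC, h0⟩ := hz
    have h0m : (0:ℕ) ∈ A r j := hA ▸ Finset.mem_image.2 ⟨C, hC, h0⟩
    have h1 := (mem_A.1 h0m).2
    have h2 : pcls r 0 = 0 := pcls_zero.2 rfl
    omega
  · exact h

end Unique

section Unique2
variable {R : Finset (Finset ℕ)} (hR : (H r).IsStrictColoring R)
include hr hR

lemma card_ge (hRc : r ≤ R.card) : R = Pcol r ∧ R.card = r := by
  classical
  have h0X : (0:ℕ) ∈ X r := zero_mem_X hr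
  obtain ⟨Cs, ⟨hCsR, hCs0⟩, _⟩ := hR.2.2.1 0 h0X
  -- Step A0 : the class of 0 is {0}
  have hCsdeg : ∀ x ∈ Cs, x = 0 := by
    intro x hx
    obtain ⟨S, hSsub, hSR, hScard⟩ :=
      Finset.exists_subsuperset_card_eq (show {Cs} ⊆ R by simpa using hCsR)
        (by simpa using by omega : ({Cs} : Finset (Finset ℕ)).card ≤ r) hRc
    have hCsS : Cs ∈ S := hSsub (Finset.mem_singleton_self Cs)
    -- the transversal selection through 0
    set ra : Finset ℕ → ℕ := fun C => if C = Cs then 0 else rep0 C with hra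
    have hrepa : ∀ C ∈ S, ra C ∈ C := by
      intro C hC
      by_cases h : C = Cs
      · rw [hra]; simp only [if_pos h]; exact h ▸ hCs0
      · rw [hra]; simp only [if_neg h]; exact rep0_mem (hR.1 C (hSR hC))
    have hpa : pinj r (S.image ra) :=
      sel_pinj hr hR hSR hScard hrepa ⟨Cs, hCsS, by rw [hra]; simp⟩
    -- the selection through x
    set rb : Finset ℕ → ℕ := fun C => if C = Cs then x else rep0 C with hrb
    have hrepb : ∀ C ∈ S, rb C ∈ C := by
      intro C hC
      by_cases h : C = Cs
      · rw [hrb]; simp only [if_pos h]; exact h ▸ hx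
      · rw [hrb]; simp only [if_neg h]; exact rep0_mem (hR.1 C (hSR hC))
    obtain ⟨hsubb, hcardb, hqb | hpb⟩ := sel_nonedge hr hR hSR hScard hrepb
    · exfalso
      obtain ⟨j, hj2, hjr, hA⟩ := qconst_eq_A hr hsubb hcardb hqb
      -- two distinct classes other than Cs give two elements of A j with distinct pcls
      have herase : 1 < (S.erase Cs).card := by
        rw [Finset.card_erase_of_mem hCsS, hScard]; omega
      obtain ⟨C₁, hC₁, C₂, hC₂, h12⟩ := Finset.one_lt_card.1 herase
      have hC₁S := Finset.mem_of_mem_erase hC₁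
      have hC₂S := Finset.mem_of_mem_erase hC₂
      have hC₁ne := (Finset.mem_erase.1 hC₁).1
      have hC₂ne := (Finset.mem_erase.1 hC₂).1
      have hv₁b : rb C₁ ∈ S.image rb := Finset.mem_image_of_mem rb hC₁S
      have hv₂b : rb C₂ ∈ S.image rb := Finset.mem_image_of_mem rb hC₂S
      have hv₁a : ra C₁ ∈ S.image ra := Finset.mem_image_of_mem ra hC₁S
      have hv₂a : ra C₂ ∈ S.image ra := Finset.mem_image_of_mem ra hC₂S
      have heq1 : ra C₁ = rb C₁ := by rw [hra, hrb]; simp [if_neg hC₁ne]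
      have heq2 : ra C₂ = rb C₂ := by rw [hra, hrb]; simp [if_neg hC₂ne]
      have hp₁ : pcls r (rb C₁) = j := (mem_A.1 (hA ▸ hv₁b)).2
      have hp₂ : pcls r (rb C₂) = j := (mem_A.1 (hA ▸ hv₂b)).2
      have : ra C₁ = ra C₂ := hpa _ hv₁a _ hv₂a (by rw [heq1, heq2]; omega)
      apply h12
      apply class_eq hR (hSR hC₁S) (hSR hC₂S) (hrepa C₁ hC₁S)
      rw [this]; exact hrepa C₂ hC₂S
    · -- pinj: 0 ∈ image rb, so x = 0
      have h0im : 0 ∈ S.image rb := pinj_zero_mem hr hsubb hcardb hpb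
      obtain ⟨C, hC, hC0⟩ := Finset.mem_image.1 h0im
      by_cases h : C = Cs
      · rw [hrb] at hC0; simp only [if_pos h] at hC0; omega
      · exfalso
        rw [hrb] at hC0; simp only [if_neg h] at hC0
        have : rep0 C ∈ C := rep0_mem (hR.1 C (hSR hC))
        rw [hC0] at this
        exact h (class_eq hR (hSR hC) hCsR this hCs0)
  -- Step A : every class is pcls-constant
  have hconst : ∀ D ∈ R, ∀ x ∈ D, ∀ y ∈ D, pcls r x = pcls r y := by
    intro D hD x hx y hy
    by_cases hDCs : D = Cs
    · rw [hCsdeg x (hDCs ▸ hx), hCsdeg y (hDCs ▸ hy)]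
    · obtain ⟨S, hSsub, hSR, hScard⟩ :=
        Finset.exists_subsuperset_card_eq
          (show ({Cs, D} : Finset (Finset ℕ)) ⊆ R by
            intro Z hZ; rcases Finset.mem_insert.1 hZ with rfl | hZ
            · exact hCsR
            · exact (Finset.mem_singleton.1 hZ) ▸ hD)
          (le_trans (Finset.card_insert_le _ _) (by simp; omega)) hRc
      have hCsS : Cs ∈ S := hSsub (Finset.mem_insert_self _ _)
      have hDS : D ∈ S := hSsub (Finset.mem_insert_of_mem (Finset.mem_singleton_self D))
      have mkrep : ∀ z ∈ D, ∀ C ∈ S,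
          (fun C => if C = D then z else if C = Cs then 0 else rep0 C) C ∈ C := by
        intro z hz C hC
        by_cases h1 : C = D
        · simp only [if_pos h1]; exact h1 ▸ hz
        · by_cases h2 : C = Cs
          · simp only [if_neg h1, if_pos h2]; exact h2 ▸ hCs0
          · simp only [if_neg h1, if_neg h2]; exact rep0_mem (hR.1 C (hSR hC))
      have hzero : ∀ z : ℕ, ∃ C ∈ S,
          (fun C => if C = D then z else if C = Cs then 0 else rep0 C) C = 0 := by
        intro z
        refine ⟨Cs, hCsS, ?_⟩
        have h1 : Cs ≠ D := fun h => hDCs h.symm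
        simp [h1]
      have hpx := sel_pinj hr hR hSR hScard (mkrep x hx) (hzero x)
      have hpy := sel_pinj hr hR hSR hScard (mkrep y hy) (hzero y)
      by_contra hne
      have hxX : x ∈ X r := hR.2.1 D hD hx
      have hsuby : Finset.image (fun C => if C = D then y else if C = Cs then 0 else rep0 C) S ⊆ X r := by
        intro v hv
        obtain ⟨C, hC, rfl⟩ := Finset.mem_image.1 hv
        exact hR.2.1 C (hSR hC) (mkrep y hy C hC)
      have hcardy : (Finset.image (fun C => if C = D then y else if C = Cs then 0 else rep0 C) S).card = r := by
        have hinj : ∀ C ∈ S, ∀ C' ∈ S,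
            (fun C => if C = D then y else if C = Cs then 0 else rep0 C) C =
            (fun C => if C = D then y else if C = Cs then 0 else rep0 C) C' → C = C' := by
          intro C hC C' hC' h
          exact class_eq hR (hSR hC) (hSR hC') (mkrep y hy C hC) (h ▸ mkrep y hy C' hC')
        rw [Finset.card_image_of_injOn (fun C hC C' hC' h => hinj C hC C' hC' h), hScard]
      obtain ⟨z, hzmem, hzp⟩ := pinj_surj hr hsuby hcardy hpy (pcls r x) (pcls_lt hr hxX)
      obtain ⟨C, hC, hCz⟩ := Finset.mem_image.1 hzmem
      by_cases h1 : C = D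
      · -- z = y, so pcls y = pcls x, contradiction
        apply hne
        rw [← hzp, ← hCz]
        simp only [if_pos h1]
      · -- z also belongs to the x-selection; pinj forces z = x, contradiction
        have hzx : z ∈ Finset.image (fun C => if C = D then x else if C = Cs then 0 else rep0 C) S := by
          refine Finset.mem_image.2 ⟨C, hC, ?_⟩
          rw [← hCz]
          simp only [if_neg h1]
        have hxmem : x ∈ Finset.image (fun C => if C = D then x else if C = Cs then 0 else rep0 C) S :=
          Finset.mem_image.2 ⟨D, hDS, by simp⟩
        have hzx2 : z = x := hpx z hzx x hxmem (by omega)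
        -- then x ∈ C and x ∈ D with C ≠ D
        have hxC : x ∈ C := by
          have := mkrep y hy C hC
          simp only [if_neg h1] at this ⊢
          by_cases h2 : C = Cs
          · simp only [if_pos h2] at this
            rw [← hCz] at hzx2
            simp only [if_neg h1, if_pos h2] at hzx2
            exact hzx2 ▸ this
          · simp only [if_neg h2] at this
            rw [← hCz] at hzx2
            simp only [if_neg h1, if_neg h2] at hzx2
            exact hzx2 ▸ this
        exact h1 (class_eq hR (hSR hC) hD hxC hx)
  -- Step B : distinct classes have distinct pcls values
  have hvalinj : ∀ D₁ ∈ R, ∀ D₂ ∈ R, ∀ x₁ ∈ D₁, ∀ x₂ ∈ D₂,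
      pcls r x₁ = pcls r x₂ → D₁ = D₂ := by
    intro D₁ hD₁ D₂ hD₂ x₁ hx₁ x₂ hx₂ hp
    by_cases hDD : D₁ = D₂
    · exact hDD
    · by_cases hp0 : pcls r x₁ = 0
      · have h1 : x₁ = 0 := pcls_zero.1 hp0
        have h2 : x₂ = 0 := pcls_zero.1 (show pcls r x₂ = 0 by omega)
        exact class_eq hR hD₁ hD₂ (h1 ▸ hx₁) (h2 ▸ hx₂)
      · have hD₁Cs : D₁ ≠ Cs := by
          intro h
          exact hp0 (by rw [hCsdeg x₁ (h ▸ hx₁)]; exact pcls_zero.2 rfl)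
        have hD₂Cs : D₂ ≠ Cs := by
          intro h
          apply hp0
          have : x₂ = 0 := hCsdeg x₂ (h ▸ hx₂)
          rw [this] at hp
          have : pcls r (0:ℕ) = 0 := pcls_zero.2 rfl
          omega
        obtain ⟨S, hSsub, hSR, hScard⟩ :=
          Finset.exists_subsuperset_card_eq
            (show ({Cs, D₁, D₂} : Finset (Finset ℕ)) ⊆ R by
              intro Z hZ
              rcases Finset.mem_insert.1 hZ with rfl | hZ
              · exact hCsR
              · rcases Finset.mem_insert.1 hZ with rfl | hZ
                · exact hD₁
                · exact (Finset.mem_singleton.1 hZ) ▸ hD₂)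
            (le_trans (Finset.card_insert_le _ _)
              (by have := Finset.card_insert_le D₁ ({D₂} : Finset (Finset ℕ)); simp at this ⊢; omega)) hRc
        have hCsS : Cs ∈ S := hSsub (Finset.mem_insert_self _ _)
        have hD₁S : D₁ ∈ S := hSsub (Finset.mem_insert_of_mem (Finset.mem_insert_self _ _))
        have hD₂S : D₂ ∈ S :=
          hSsub (Finset.mem_insert_of_mem (Finset.mem_insert_of_mem (Finset.mem_singleton_self _)))
        set rc : Finset ℕ → ℕ :=
          fun C => if C = D₁ then x₁ else if C = D₂ then x₂ else if C = Cs then 0 else rep0 C with hrc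
        have hrepc : ∀ C ∈ S, rc C ∈ C := by
          intro C hC
          rw [hrc]
          by_cases h1 : C = D₁
          · simp only [if_pos h1]; exact h1 ▸ hx₁
          · by_cases h2 : C = D₂
            · simp only [if_neg h1, if_pos h2]; exact h2 ▸ hx₂
            · by_cases h3 : C = Cs
              · simp only [if_neg h1, if_neg h2, if_pos h3]; exact h3 ▸ hCs0
              · simp only [if_neg h1, if_neg h2, if_neg h3]
                exact rep0_mem (hR.1 C (hSR hC))
        have hpc : pinj r (S.image rc) := by
          apply sel_pinj hr hR hSR hScard hrepc
          refine ⟨Cs, hCsS, ?_⟩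
          rw [hrc]
          simp [Ne.symm hD₁Cs, Ne.symm hD₂Cs]
        have hx₁m : x₁ ∈ S.image rc := Finset.mem_image.2 ⟨D₁, hD₁S, by rw [hrc]; simp⟩
        have hx₂m : x₂ ∈ S.image rc := Finset.mem_image.2 ⟨D₂, hD₂S, by
          rw [hrc]; simp [Ne.symm hDD]⟩
        have : x₁ = x₂ := hpc x₁ hx₁m x₂ hx₂m hp
        exact class_eq hR hD₁ hD₂ hx₁ (this ▸ hx₂)
  -- Step C : R = Pcol
  have hclasses : ∀ D ∈ R, ∃ j, j < r ∧ D = A r j := by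
    intro D hD
    have hDne : D.Nonempty := hR.1 D hD
    have hrep : rep0 D ∈ D := rep0_mem hDne
    have hrX : rep0 D ∈ X r := hR.2.1 D hD hrep
    refine ⟨pcls r (rep0 D), pcls_lt hr hrX, ?_⟩
    apply Finset.Subset.antisymm
    · intro v hv
      exact mem_A.2 ⟨hR.2.1 D hD hv, hconst D hD v hv (rep0 D) hrep⟩
    · intro v hv
      rw [mem_A] at hv
      obtain ⟨D', ⟨hD'R, hvD'⟩, _⟩ := hR.2.2.1 v hv.1
      have : D' = D := hvalinj D' hD'R D hD v hvD' (rep0 D) hrep hv.2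
      exact this ▸ hvD'
  have hsubP : R ⊆ Pcol r := by
    intro D hD
    obtain ⟨j, hj, rfl⟩ := hclasses D hD
    exact Finset.mem_image.2 ⟨j, Finset.mem_range.2 hj, rfl⟩
  have hcard : R.card = r := le_antisymm (by rw [← Pcol_card hr]; exact Finset.card_le_card hsubP) hRc
  exact ⟨Finset.eq_of_subset_of_card_le hsubP (by rw [Pcol_card hr, hcard]), hcard⟩

end Unique2
section Unique3
variable {R : Finset (Finset ℕ)} (hR : (H r).IsStrictColoring R)
include hr hR

lemma sum_cards : ∑ C ∈ R, C.card = r * (r - 1) - 1 := by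
  have hXU : X r = R.biUnion id := by
    ext x
    simp only [Finset.mem_biUnion, id]
    constructor
    · intro hx
      obtain ⟨C, ⟨hC, hxC⟩, _⟩ := hR.2.2.1 x hx
      exact ⟨C, hC, hxC⟩
    · rintro ⟨C, hC, hxC⟩
      exact hR.2.1 C hC hxC
  have hdisj : ∀ C ∈ R, ∀ D ∈ R, C ≠ D → Disjoint (id C) (id D) := by
    intro C hC D hD hne
    rw [Finset.disjoint_left]
    intro a haC haD
    exact hne (class_eq hR hC hD haC haD)
  calc ∑ C ∈ R, C.card = (R.biUnion id).card := (Finset.card_biUnion hdisj).symm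
    _ = (X r).card := by rw [← hXU]
    _ = r * (r - 1) - 1 := X_card hr

lemma card_lt (hRc : R.card < r) : R = Qcol r ∧ R.card = r - 1 := by
  classical
  have hsum := sum_cards hr hR
  have hrr : r * (r - 1) = r * r - r := by rw [Nat.mul_sub]; omega
  have h4 : 4 * r ≤ r * r := Nat.mul_le_mul_right r hr
  have hle : ∀ C ∈ R, C.card ≤ r := fun C hC => class_card_le hr hR hC
  -- R.card = r - 1
  have hRcard : R.card = r - 1 := by
    by_contra h
    have h2 : R.card ≤ r - 2 := by omega
    have hb1 : ∑ C ∈ R, C.card ≤ ∑ _C ∈ R, r := Finset.sum_le_sum hle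
    rw [Finset.sum_const, smul_eq_mul] at hb1
    have hb : R.card * r ≤ (r - 2) * r := Nat.mul_le_mul_right r h2
    have hm : (r - 2) * r = r * r - 2 * r := by rw [Nat.sub_mul]
    omega
  -- at most one class of card < r
  have honesmall : ∀ C₁ ∈ R, ∀ C₂ ∈ R, C₁ ≠ C₂ → C₁.card < r → C₂.card < r → False := by
    intro C₁ h₁ C₂ h₂ hne hc₁ hc₂
    have h₂' : C₂ ∈ R.erase C₁ := Finset.mem_erase.2 ⟨Ne.symm hne, h₂⟩
    have hs1 : C₁.card + ∑ C ∈ R.erase C₁, C.card = ∑ C ∈ R, C.card :=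
      Finset.add_sum_erase R _ h₁
    have hs2 : C₂.card + ∑ C ∈ (R.erase C₁).erase C₂, C.card = ∑ C ∈ R.erase C₁, C.card :=
      Finset.add_sum_erase _ _ h₂'
    have hrest : ∑ C ∈ (R.erase C₁).erase C₂, C.card ≤ ∑ _C ∈ (R.erase C₁).erase C₂, r :=
      Finset.sum_le_sum (fun C hC =>
        hle C (Finset.mem_of_mem_erase (Finset.mem_of_mem_erase hC)))
    rw [Finset.sum_const, smul_eq_mul] at hrest
    have hcc : ((R.erase C₁).erase C₂).card = r - 3 := by
      rw [Finset.card_erase_of_mem h₂', Finset.card_erase_of_mem h₁, hRcard]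
      omega
    rw [hcc] at hrest
    have hm : (r - 3) * r = r * r - 3 * r := by rw [Nat.sub_mul]
    omega
  -- not all classes have card r
  have hnotall : ¬ (∀ C ∈ R, C.card = r) := by
    intro hall
    have : ∑ C ∈ R, C.card = ∑ _C ∈ R, r := Finset.sum_congr rfl hall
    rw [Finset.sum_const, smul_eq_mul, hRcard] at this
    have hm : (r - 1) * r = r * r - r := by rw [Nat.sub_mul]; omega
    omega
  push_neg at hnotall
  obtain ⟨C₀, hC₀R, hC₀⟩ := hnotall
  have hC₀lt : C₀.card < r := lt_of_le_of_ne (hle C₀ hC₀R) hC₀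
  -- every other class equals some A j
  have hbig : ∀ C ∈ R, C ≠ C₀ → 2 ≤ pcls r (rep0 C) ∧ pcls r (rep0 C) < r ∧
      C = A r (pcls r (rep0 C)) := by
    intro C hC hne
    have hcr : C.card = r := by
      by_contra h
      exact honesmall C hC C₀ hC₀R hne (lt_of_le_of_ne (hle C hC) h) hC₀lt
    have hgood : ∃ j, 2 ≤ j ∧ j < r ∧ C = A r j := by
      rcases mono_nonedge hR hC (subset_refl C) hcr with hq | hp
      · exact qconst_eq_A hr (hR.2.1 C hC) hcr hq
      · exfalso
        -- C would be a transversal; find another big class D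
        have hcc : 1 ≤ ((R.erase C).erase C₀).card := by
          have e1 : (R.erase C).card = r - 2 := by
            rw [Finset.card_erase_of_mem hC, hRcard]; omega
          have : (R.erase C).card - 1 ≤ ((R.erase C).erase C₀).card :=
            Finset.pred_card_le_card_erase
          omega
        obtain ⟨D, hD⟩ := Finset.card_pos.1
          (show 0 < ((R.erase C).erase C₀).card by omega)
        have hDC₀ : D ≠ C₀ := (Finset.mem_erase.1 hD).1
        have hDC : D ≠ C := (Finset.mem_erase.1 (Finset.mem_of_mem_erase hD)).1
        have hDR : D ∈ R := Finset.mem_of_mem_erase (Finset.mem_of_mem_erase hD)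
        have hDr : D.card = r := by
          by_contra h
          exact honesmall D hDR C₀ hC₀R hDC₀ (lt_of_le_of_ne (hle D hDR) h) hC₀lt
        rcases mono_nonedge hR hDR (subset_refl D) hDr with hq' | hp'
        · obtain ⟨j, hj2, hjr, hDA⟩ := qconst_eq_A hr (hR.2.1 D hDR) hDr hq'
          obtain ⟨z, hz, hzj⟩ := pinj_surj hr (hR.2.1 C hC) hcr hp j hjr
          have hzA : z ∈ A r j := mem_A.2 ⟨hR.2.1 C hC hz, hzj⟩
          exact hDC (class_eq hR hDR hC (hDA ▸ hzA) hz)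
        · have h0C : 0 ∈ C := pinj_zero_mem hr (hR.2.1 C hC) hcr hp
          have h0D : 0 ∈ D := pinj_zero_mem hr (hR.2.1 D hDR) hDr hp'
          exact hDC (class_eq hR hDR hC h0D h0C)
    obtain ⟨j, hj2, hjr, hCA⟩ := hgood
    have : rep0 C ∈ A r j := hCA ▸ rep0_mem (hR.1 C hC)
    have hj : pcls r (rep0 C) = j := (mem_A.1 this).2
    rw [hj]
    exact ⟨hj2, hjr, hCA⟩
  -- the values realized by the big classes are exactly Ico 2 r
  have hV : (R.erase C₀).image (fun C => pcls r (rep0 C)) = Finset.Ico 2 r := by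
    apply Finset.eq_of_subset_of_card_le
    · intro j hj
      obtain ⟨C, hC, rfl⟩ := Finset.mem_image.1 hj
      have := hbig C (Finset.mem_of_mem_erase hC) (Finset.mem_erase.1 hC).1
      exact Finset.mem_Ico.2 ⟨this.1, this.2.1⟩
    · rw [Nat.card_Ico]
      have hinj : ∀ C ∈ R.erase C₀, ∀ C' ∈ R.erase C₀,
          pcls r (rep0 C) = pcls r (rep0 C') → C = C' := by
        intro C hC C' hC' h
        have h1 := (hbig C (Finset.mem_of_mem_erase hC) (Finset.mem_erase.1 hC).1).2.2
        have h2 := (hbig C' (Finset.mem_of_mem_erase hC') (Finset.mem_erase.1 hC').1).2.2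
        rw [h1, h2, h]
      rw [Finset.card_image_of_injOn (fun C hC C' hC' h => hinj C hC C' hC' h),
        Finset.card_erase_of_mem hC₀R, hRcard]
      omega
  have hAj : ∀ j, 2 ≤ j → j < r → A r j ∈ R := by
    intro j hj2 hjr
    have : j ∈ (R.erase C₀).image (fun C => pcls r (rep0 C)) := by
      rw [hV]; exact Finset.mem_Ico.2 ⟨hj2, hjr⟩
    obtain ⟨C, hC, hCj⟩ := Finset.mem_image.1 this
    have := (hbig C (Finset.mem_of_mem_erase hC) (Finset.mem_erase.1 hC).1).2.2
    rw [hCj] at this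
    exact this ▸ Finset.mem_of_mem_erase hC
  -- C₀ = B r 1
  have hC₀B : C₀ = B r 1 := by
    apply Finset.Subset.antisymm
    · intro x hx
      have hxX : x ∈ X r := hR.2.1 C₀ hC₀R hx
      have hq := qcls_mem_Ico hr hxX
      rw [Finset.mem_Ico] at hq
      rcases Nat.lt_or_ge (qcls r x) 2 with h2 | h2
      · exact mem_B.2 ⟨hxX, by omega⟩
      · exfalso
        have hpx : pcls r x = qcls r x := ((qcls_ge_two hr h2).1 rfl)
        have hxA : x ∈ A r (qcls r x) := mem_A.2 ⟨hxX, hpx⟩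
        have hAR := hAj (qcls r x) h2 hq.2
        have : A r (qcls r x) = C₀ := class_eq hR hAR hC₀R hxA hx
        rw [← this] at hC₀
        rw [card_A hr h2 hq.2] at hC₀
        exact hC₀ rfl
    · intro x hx
      have hxX : x ∈ X r := B_sub_X hr hx
      obtain ⟨D, ⟨hDR, hxD⟩, _⟩ := hR.2.2.1 x hxX
      by_cases hD0 : D = C₀
      · exact hD0 ▸ hxD
      · exfalso
        obtain ⟨hj2, hjr, hDA⟩ := hbig D hDR hD0
        have : pcls r x = pcls r (rep0 D) := (mem_A.1 (hDA ▸ hxD)).2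
        have hq1 : qcls r x = 1 := (mem_B.1 hx).2
        have hple : pcls r x ≤ 1 := by unfold qcls at hq1; omega
        omega
  -- conclude R = Qcol
  have hsubQ : R ⊆ Qcol r := by
    intro C hC
    by_cases h : C = C₀
    · exact Finset.mem_image.2 ⟨1, Finset.mem_Ico.2 ⟨le_refl 1, by omega⟩, by rw [h, hC₀B]⟩
    · obtain ⟨hj2, hjr, hCA⟩ := hbig C hC h
      refine Finset.mem_image.2 ⟨pcls r (rep0 C), Finset.mem_Ico.2 ⟨by omega, hjr⟩, ?_⟩
      rw [B_eq_A hr hj2]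
      exact hCA.symm
  exact ⟨Finset.eq_of_subset_of_card_le hsubQ (by rw [Qcol_card hr, hRcard]), hRcard⟩

lemma classify : (R = Pcol r ∧ R.card = r) ∨ (R = Qcol r ∧ R.card = r - 1) := by
  rcases Nat.lt_or_ge R.card r with h | h
  · exact Or.inr (card_lt hr hR h)
  · exact Or.inl (card_ge hr hR h)

end Unique3
end Stmt19

theorem stmt19 (r : ℕ) (hr : 4 ≤ r) :
    ∃ H : BiHypergraph ℕ, H.IsUniform r ∧
      H.verts.card = r * (r - 1) - 1 ∧
      H.IsOneRealization {r, r - 1} := by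
  refine ⟨Stmt19.H r, ?_, ?_, ?_, ?_⟩
  · intro e he
    exact (Stmt19.mem_edges.1 he).1.2
  · exact Stmt19.X_card hr
  · ext k
    simp only [BiHypergraph.feasibleSet, Set.mem_setOf_eq, Finset.coe_insert,
      Finset.coe_singleton, Set.mem_insert_iff, Set.mem_singleton_iff]
    constructor
    · rintro ⟨P, hP, rfl⟩
      rcases Stmt19.classify hr hP with ⟨_, h⟩ | ⟨_, h⟩
      · left; exact h
      · right; exact h
    · rintro (rfl | rfl)
      · exact ⟨_, Stmt19.Pcol_strict hr, Stmt19.Pcol_card hr⟩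
      · exact ⟨_, Stmt19.Qcol_strict hr, Stmt19.Qcol_card hr⟩
  · intro P Q hP hQ hcard
    rcases Stmt19.classify hr hP with ⟨hPe, hPc⟩ | ⟨hPe, hPc⟩ <;>
      rcases Stmt19.classify hr hQ with ⟨hQe, hQc⟩ | ⟨hQe, hQc⟩
    · rw [hPe, hQe]
    · omega
    · omega
    · rw [hPe, hQe]
end
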